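/- arXiv:1912.12375 — 8 statements merged into one kernel-verified Lean document; each statement's English description precedes it below -/
import Mathlib

section
/- Let c : I → ℝ^6 be a solution of the Kepler–Heisenberg Hamilton equations on a maximal open interval I, with H(c(t)) = 0 for all t ∈ I and (x(t), y(t)) ≠ (0, 0) for all t ∈ I, and suppose z has consecutive zeros t₀ < t₁ < t₂. If s(t₂) = s(t₀) (i.e. the dilation factor λ = exp(s(t₂) − s(t₀)) equals 1), then, with φ = θ(t₂) − θ(t₀) and T = t₂ − t₀, the orbit is quasi-periodic: for every t ∈ I with t + T ∈ I, c(t + T) = ρ_φ(c(t)). -/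
open Real Set

/-- The Kepler-Heisenberg Hamiltonian on phase space `ℝ^6` with coordinates
`(x, y, z, pₓ, p_y, p_z)`. -/
noncomputable def KH (x y z px py pz : ℝ) : ℝ :=
  (1/2) * ((px - (1/2) * y * pz)^2 + (py + (1/2) * x * pz)^2)
    - 1 / (8 * π * Real.sqrt ((x^2 + y^2)^2 + 16 * z^2))

/-- The adapted coordinate `s = (1/4)·log((x² + y²)² + 16z²)`. -/
noncomputable def sCoord (x y z : ℝ) : ℝ :=
  (1/4) * Real.log ((x^2 + y^2)^2 + 16 * z^2)

/-- The adapted coordinate `u = arctan(4z/(x² + y²))`. -/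
noncomputable def uCoord (x y z : ℝ) : ℝ :=
  Real.arctan (4 * z / (x^2 + y^2))

/-- The dilational momentum `J = p_s = x·pₓ + y·p_y + 2z·p_z`. -/
def Jmom (x y z px py pz : ℝ) : ℝ := x * px + y * py + 2 * z * pz

/-- The angular momentum `p_θ = x·p_y − y·pₓ`. -/
def pTheta (x y px py : ℝ) : ℝ := x * py - y * px

/-- The adapted momentum coordinate `p_u`. -/
noncomputable def pU (x y z px py pz : ℝ) : ℝ :=
  (1/4) * pz * (x^2 + y^2) - 2 * z * (x * px + y * py) / (x^2 + y^2)

/-- Rotation by angle `φ` about the `z`-axis, lifted to phase space. -/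
noncomputable def rot (φ : ℝ) (q : ℝ × ℝ × ℝ × ℝ × ℝ × ℝ) : ℝ × ℝ × ℝ × ℝ × ℝ × ℝ :=
  (q.1 * Real.cos φ - q.2.1 * Real.sin φ,
   q.1 * Real.sin φ + q.2.1 * Real.cos φ,
   q.2.2.1,
   q.2.2.2.1 * Real.cos φ - q.2.2.2.2.1 * Real.sin φ,
   q.2.2.2.1 * Real.sin φ + q.2.2.2.2.1 * Real.cos φ,
   q.2.2.2.2.2)

/-- The Carnot dilation by `λ > 0`, lifted to phase space:
`δ_λ(x, y, z, pₓ, p_y, p_z) = (λx, λy, λ²z, λ⁻¹pₓ, λ⁻¹p_y, λ⁻²p_z)`. -/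
noncomputable def dil (l : ℝ) (q : ℝ × ℝ × ℝ × ℝ × ℝ × ℝ) : ℝ × ℝ × ℝ × ℝ × ℝ × ℝ :=
  (l * q.1, l * q.2.1, l^2 * q.2.2.1,
   l⁻¹ * q.2.2.2.1, l⁻¹ * q.2.2.2.2.1, (l^2)⁻¹ * q.2.2.2.2.2)

/-- The Hamiltonian as a function on the product phase space. -/
noncomputable def KH6 (q : ℝ × ℝ × ℝ × ℝ × ℝ × ℝ) : ℝ :=
  KH q.1 q.2.1 q.2.2.1 q.2.2.2.1 q.2.2.2.2.1 q.2.2.2.2.2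

/-- `c = (x, y, z, pₓ, p_y, p_z)` is a solution of Hamilton's equations for `KH` on the
open interval `I`: each coordinate function is differentiable with derivative given by the
corresponding (signed) partial derivative of `KH`, and the position avoids the origin. -/
def IsSolutionOn (I : Set ℝ) (x y z px py pz : ℝ → ℝ) : Prop :=
  IsOpen I ∧ I.OrdConnected ∧ I.Nonempty ∧
  (∀ t ∈ I, (x t, y t, z t) ≠ (0, 0, 0)) ∧
  (∀ t ∈ I,
    HasDerivAt x (deriv (fun a => KH (x t) (y t) (z t) a (py t) (pz t)) (px t)) t ∧
    HasDerivAt y (deriv (fun a => KH (x t) (y t) (z t) (px t) a (pz t)) (py t)) t ∧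
    HasDerivAt z (deriv (fun a => KH (x t) (y t) (z t) (px t) (py t) a) (pz t)) t ∧
    HasDerivAt px (-(deriv (fun a => KH a (y t) (z t) (px t) (py t) (pz t)) (x t))) t ∧
    HasDerivAt py (-(deriv (fun a => KH (x t) a (z t) (px t) (py t) (pz t)) (y t))) t ∧
    HasDerivAt pz (-(deriv (fun a => KH (x t) (y t) a (px t) (py t) (pz t)) (z t))) t)

/-- A solution on a maximal open interval: it cannot be extended to a solution on any
strictly larger open interval. -/
def IsMaximalSolution (I : Set ℝ) (x y z px py pz : ℝ → ℝ) : Prop :=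
  IsSolutionOn I x y z px py pz ∧
  ∀ (I' : Set ℝ) (x' y' z' px' py' pz' : ℝ → ℝ),
    IsSolutionOn I' x' y' z' px' py' pz' → I ⊆ I' →
    (∀ t ∈ I, x' t = x t ∧ y' t = y t ∧ z' t = z t ∧
      px' t = px t ∧ py' t = py t ∧ pz' t = pz t) →
    I' = I


/-! ### Auxiliary machinery -/

/-- The Hamiltonian vector field of `KH` on the product phase space. -/
noncomputable def vf (q : ℝ × ℝ × ℝ × ℝ × ℝ × ℝ) : ℝ × ℝ × ℝ × ℝ × ℝ × ℝ :=
  (q.2.2.2.1 - (1/2) * q.2.1 * q.2.2.2.2.2,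
   q.2.2.2.2.1 + (1/2) * q.1 * q.2.2.2.2.2,
   -((1/2) * q.2.1 * (q.2.2.2.1 - (1/2) * q.2.1 * q.2.2.2.2.2)) +
     (1/2) * q.1 * (q.2.2.2.2.1 + (1/2) * q.1 * q.2.2.2.2.2),
   -((1/2) * q.2.2.2.2.2 * (q.2.2.2.2.1 + (1/2) * q.1 * q.2.2.2.2.2) +
     q.1 * (q.1^2 + q.2.1^2) / (4 * π * (Real.sqrt ((q.1^2 + q.2.1^2)^2 + 16 * q.2.2.1^2))^3)),
   -(-((1/2) * q.2.2.2.2.2 * (q.2.2.2.1 - (1/2) * q.2.1 * q.2.2.2.2.2)) +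
     q.2.1 * (q.1^2 + q.2.1^2) / (4 * π * (Real.sqrt ((q.1^2 + q.2.1^2)^2 + 16 * q.2.2.1^2))^3)),
   -(2 * q.2.2.1 / (π * (Real.sqrt ((q.1^2 + q.2.1^2)^2 + 16 * q.2.2.1^2))^3)))

lemma KH_hasDerivAt_px (x y z px py pz : ℝ) :
    HasDerivAt (fun a => KH x y z a py pz) (px - (1/2) * y * pz) px := by
  have h : HasDerivAt (fun a : ℝ => (1/2) * ((a - (1/2) * y * pz)^2 + (py + (1/2) * x * pz)^2)
      - 1 / (8 * π * Real.sqrt ((x^2 + y^2)^2 + 16 * z^2)))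
      ((1/2) * (2 * (px - (1/2)*y*pz)^1 * 1)) px := by
    exact ((((hasDerivAt_id px).sub_const ((1/2)*y*pz)).pow 2).add_const _).const_mul (1/2)
      |>.sub_const _
  refine h.congr_deriv ?_
  ring

lemma KH_hasDerivAt_py (x y z px py pz : ℝ) :
    HasDerivAt (fun a => KH x y z px a pz) (py + (1/2) * x * pz) py := by
  have h : HasDerivAt (fun a : ℝ => (1/2) * ((px - (1/2) * y * pz)^2 + (a + (1/2) * x * pz)^2)
      - 1 / (8 * π * Real.sqrt ((x^2 + y^2)^2 + 16 * z^2)))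
      ((1/2) * (2 * (py + (1/2)*x*pz)^1 * 1)) py := by
    exact (((((hasDerivAt_id py).add_const ((1/2)*x*pz)).pow 2).const_add _).const_mul (1/2))
      |>.sub_const _
  refine h.congr_deriv ?_
  ring

lemma KH_hasDerivAt_pz (x y z px py pz : ℝ) :
    HasDerivAt (fun a => KH x y z px py a)
      (-((1/2) * y * (px - (1/2) * y * pz)) + (1/2) * x * (py + (1/2) * x * pz)) pz := by
  have h1 : HasDerivAt (fun a : ℝ => px - (1/2) * y * a) (-((1/2)*y)) pz := by
    simpa using (((hasDerivAt_id pz).const_mul ((1/2)*y)).const_sub px)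
  have h2 : HasDerivAt (fun a : ℝ => py + (1/2) * x * a) ((1/2)*x) pz := by
    simpa using (((hasDerivAt_id pz).const_mul ((1/2)*x)).const_add py)
  have h : HasDerivAt (fun a : ℝ => (1/2) * ((px - (1/2) * y * a)^2 + (py + (1/2) * x * a)^2)
      - 1 / (8 * π * Real.sqrt ((x^2 + y^2)^2 + 16 * z^2)))
      ((1/2) * (2 * (px - (1/2)*y*pz)^1 * (-((1/2)*y)) + 2 * (py + (1/2)*x*pz)^1 * ((1/2)*x))) pz := by
    exact (((h1.pow 2).add (h2.pow 2)).const_mul (1/2)).sub_const _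
  have e : (fun a : ℝ => KH x y z px py a) = (fun a : ℝ =>
      (1/2) * ((px - (1/2) * y * a)^2 + (py + (1/2) * x * a)^2)
      - 1 / (8 * π * Real.sqrt ((x^2 + y^2)^2 + 16 * z^2))) := by
    funext a
    simp only [KH]
  rw [show (fun a => KH x y z px py a) = _ from e]
  convert h using 1
  ring

lemma inv_sqrt_hasDerivAt {u : ℝ → ℝ} {u' a : ℝ} (hu : HasDerivAt u u' a)
    (h0 : u a ≠ 0) (hpos : 0 ≤ u a) :
    HasDerivAt (fun t => 1 / (8 * π * Real.sqrt (u t)))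
      (-(u' / (16 * π * (Real.sqrt (u a))^3))) a := by
  have hua : 0 < u a := lt_of_le_of_ne hpos (Ne.symm h0)
  have hsq : Real.sqrt (u a) ^ 2 = u a := Real.sq_sqrt hpos
  have hs0 : Real.sqrt (u a) ≠ 0 := by positivity
  have h1 : HasDerivAt (fun t => Real.sqrt (u t)) (1 / (2 * Real.sqrt (u a)) * u') a :=
    (Real.hasDerivAt_sqrt h0).comp a hu
  have h2 : HasDerivAt (fun t => 8 * π * Real.sqrt (u t))
      (8 * π * (1 / (2 * Real.sqrt (u a)) * u')) a := h1.const_mul _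
  have hne : 8 * π * Real.sqrt (u a) ≠ 0 := by
    have := Real.pi_ne_zero; positivity
  have h3 := h2.inv hne
  have : (fun t => 1 / (8 * π * Real.sqrt (u t))) = (fun t => (8 * π * Real.sqrt (u t))⁻¹) := by
    funext t; rw [one_div]
  rw [this]
  refine h3.congr_deriv ?_
  have hpi := Real.pi_ne_zero
  rw [show Real.sqrt (u a) ^ 3 = Real.sqrt (u a) ^ 2 * Real.sqrt (u a) by ring, hsq,
    show (8 * π * Real.sqrt (u a)) ^ 2 = 64 * π ^ 2 * (Real.sqrt (u a) ^ 2) by ring, hsq]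
  field_simp
  ring

lemma KH_hasDerivAt_x (x y z px py pz : ℝ) (h0 : (x^2 + y^2)^2 + 16 * z^2 ≠ 0) :
    HasDerivAt (fun a => KH a y z px py pz)
      ((1/2) * pz * (py + (1/2) * x * pz)
        + x * (x^2 + y^2) / (4 * π * (Real.sqrt ((x^2 + y^2)^2 + 16 * z^2))^3)) x := by
  have hu : HasDerivAt (fun a : ℝ => (a^2 + y^2)^2 + 16 * z^2)
      (2 * (x^2 + y^2)^1 * (2 * x^1)) x :=
    (((hasDerivAt_pow 2 x).add_const (y^2)).pow 2).add_const _
  have hpot := inv_sqrt_hasDerivAt (u := fun a : ℝ => (a^2 + y^2)^2 + 16 * z^2) hu h0 (by positivity)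
  have hkin : HasDerivAt (fun a : ℝ => (1/2) * ((px - (1/2) * y * pz)^2 + (a * ((1/2) * pz) + py)^2))
      ((1/2) * (2 * (x * ((1/2) * pz) + py)^1 * (1 * ((1/2) * pz)))) x :=
    ((((hasDerivAt_id x).mul_const ((1/2) * pz)).add_const py).pow 2).const_add _ |>.const_mul _
  have h := hkin.sub hpot
  have e : (fun a => KH a y z px py pz) = (fun a : ℝ =>
      (1/2) * ((px - (1/2) * y * pz)^2 + (a * ((1/2) * pz) + py)^2)
      - 1 / (8 * π * Real.sqrt ((a^2 + y^2)^2 + 16 * z^2))) := by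
    funext a; simp only [KH]; ring_nf
  rw [e]
  refine h.congr_deriv ?_
  ring

lemma KH_hasDerivAt_y (x y z px py pz : ℝ) (h0 : (x^2 + y^2)^2 + 16 * z^2 ≠ 0) :
    HasDerivAt (fun a => KH x a z px py pz)
      (-((1/2) * pz * (px - (1/2) * y * pz))
        + y * (x^2 + y^2) / (4 * π * (Real.sqrt ((x^2 + y^2)^2 + 16 * z^2))^3)) y := by
  have hu : HasDerivAt (fun a : ℝ => (x^2 + a^2)^2 + 16 * z^2)
      (2 * (x^2 + y^2)^1 * (2 * y^1)) y :=
    ((((hasDerivAt_pow 2 y).const_add (x^2)).pow 2).add_const _)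
  have hpot := inv_sqrt_hasDerivAt (u := fun a : ℝ => (x^2 + a^2)^2 + 16 * z^2) hu h0 (by positivity)
  have hkin : HasDerivAt (fun a : ℝ => (1/2) * ((a * (-((1/2) * pz)) + px)^2 + (py + (1/2) * x * pz)^2))
      ((1/2) * (2 * (y * (-((1/2) * pz)) + px)^1 * (1 * (-((1/2) * pz))))) y :=
    ((((hasDerivAt_id y).mul_const (-((1/2) * pz))).add_const px).pow 2).add_const _ |>.const_mul _
  have h := hkin.sub hpot
  have e : (fun a => KH x a z px py pz) = (fun a : ℝ =>
      (1/2) * ((a * (-((1/2) * pz)) + px)^2 + (py + (1/2) * x * pz)^2)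
      - 1 / (8 * π * Real.sqrt ((x^2 + a^2)^2 + 16 * z^2))) := by
    funext a; simp only [KH]; ring_nf
  rw [e]
  refine h.congr_deriv ?_
  ring

lemma KH_hasDerivAt_z (x y z px py pz : ℝ) (h0 : (x^2 + y^2)^2 + 16 * z^2 ≠ 0) :
    HasDerivAt (fun a => KH x y a px py pz)
      (2 * z / (π * (Real.sqrt ((x^2 + y^2)^2 + 16 * z^2))^3)) z := by
  have hu : HasDerivAt (fun a : ℝ => (x^2 + y^2)^2 + a^2 * 16)
      (2 * z^1 * 16) z := ((hasDerivAt_pow 2 z).mul_const 16).const_add _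
  have h0' : ((fun a : ℝ => (x^2 + y^2)^2 + a^2 * 16)) z ≠ 0 := by
    simpa [mul_comm] using h0
  have hpot := inv_sqrt_hasDerivAt hu h0' (by positivity)
  have h := (hasDerivAt_const z ((1/2) * ((px - (1/2) * y * pz)^2 + (py + (1/2) * x * pz)^2))).sub hpot
  have e : (fun a => KH x y a px py pz) = (fun a : ℝ =>
      (1/2) * ((px - (1/2) * y * pz)^2 + (py + (1/2) * x * pz)^2)
      - 1 / (8 * π * Real.sqrt ((x^2 + y^2)^2 + a^2 * 16))) := by
    funext a; simp only [KH]; ring_nf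
  rw [e]
  refine h.congr_deriv ?_
  have : ((x^2 + y^2)^2 + z^2 * 16) = ((x^2 + y^2)^2 + 16 * z^2) := by ring
  rw [this]
  ring

lemma rot_vf (φ : ℝ) (q : ℝ × ℝ × ℝ × ℝ × ℝ × ℝ) : vf (rot φ q) = rot φ (vf q) := by
  obtain ⟨X, Y, Z, PX, PY, PZ⟩ := q
  have hcs : Real.sin φ ^ 2 + Real.cos φ ^ 2 = 1 := Real.sin_sq_add_cos_sq φ
  have hr : (X * Real.cos φ - Y * Real.sin φ)^2 + (X * Real.sin φ + Y * Real.cos φ)^2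
      = X^2 + Y^2 := by linear_combination (X^2 + Y^2) * hcs
  simp only [vf, rot, hr]
  refine Prod.ext ?_ (Prod.ext ?_ (Prod.ext ?_ (Prod.ext ?_ (Prod.ext ?_ ?_))))
  · simp only; ring
  · simp only; ring
  · simp only
    linear_combination ((1/2) * (X * (PY + (1/2) * X * PZ) - Y * (PX - (1/2) * Y * PZ))) * hcs
  · simp only; ring
  · simp only; ring
  · simp only

lemma vf_contDiffAt {q : ℝ × ℝ × ℝ × ℝ × ℝ × ℝ}
    (h0 : (q.1^2 + q.2.1^2)^2 + 16 * q.2.2.1^2 ≠ 0) : ContDiffAt ℝ 1 vf q := by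
  have hg : ContDiff ℝ 1 (fun p : ℝ × ℝ × ℝ × ℝ × ℝ × ℝ => (p.1^2 + p.2.1^2)^2 + 16 * p.2.2.1^2) := by
    fun_prop
  have hsqrt : ContDiffAt ℝ 1
      (fun p : ℝ × ℝ × ℝ × ℝ × ℝ × ℝ => Real.sqrt ((p.1^2 + p.2.1^2)^2 + 16 * p.2.2.1^2)) q :=
    (Real.contDiffAt_sqrt h0).comp q hg.contDiffAt
  have hQpos : 0 < (q.1^2 + q.2.1^2)^2 + 16 * q.2.2.1^2 :=
    lt_of_le_of_ne (by positivity) (Ne.symm h0)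
  have hsne : Real.sqrt ((q.1^2 + q.2.1^2)^2 + 16 * q.2.2.1^2) ≠ 0 := by positivity
  have hden : ContDiffAt ℝ 1
      (fun p : ℝ × ℝ × ℝ × ℝ × ℝ × ℝ =>
        4 * π * (Real.sqrt ((p.1^2 + p.2.1^2)^2 + 16 * p.2.2.1^2))^3) q :=
    ((contDiffAt_const (c := 4 * π)).mul (hsqrt.pow 3))
  have hdenne : 4 * π * (Real.sqrt ((q.1^2 + q.2.1^2)^2 + 16 * q.2.2.1^2))^3 ≠ 0 := by
    have := Real.pi_pos; positivity
  have hden2 : ContDiffAt ℝ 1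
      (fun p : ℝ × ℝ × ℝ × ℝ × ℝ × ℝ =>
        π * (Real.sqrt ((p.1^2 + p.2.1^2)^2 + 16 * p.2.2.1^2))^3) q :=
    ((contDiffAt_const (c := π)).mul (hsqrt.pow 3))
  have hden2ne : π * (Real.sqrt ((q.1^2 + q.2.1^2)^2 + 16 * q.2.2.1^2))^3 ≠ 0 := by
    have := Real.pi_pos; positivity
  unfold vf
  apply ContDiffAt.prodMk (by fun_prop)
  apply ContDiffAt.prodMk (by fun_prop)
  apply ContDiffAt.prodMk (by fun_prop)
  apply ContDiffAt.prodMk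
  · exact (ContDiffAt.add (by fun_prop) ((ContDiffAt.div (by fun_prop) hden hdenne))).neg
  apply ContDiffAt.prodMk
  · exact (ContDiffAt.add (by fun_prop) ((ContDiffAt.div (by fun_prop) hden hdenne))).neg
  · exact (ContDiffAt.div (by fun_prop) hden2 hden2ne).neg

lemma uniq {J : Set ℝ} (hJo : IsOpen J) (hJp : IsPreconnected J)
    {f g : ℝ → ℝ × ℝ × ℝ × ℝ × ℝ × ℝ}
    (hf : ∀ t ∈ J, HasDerivAt f (vf (f t)) t ∧
      ((f t).1^2 + (f t).2.1^2)^2 + 16 * (f t).2.2.1^2 ≠ 0)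
    (hg : ∀ t ∈ J, HasDerivAt g (vf (g t)) t ∧
      ((g t).1^2 + (g t).2.1^2)^2 + 16 * (g t).2.2.1^2 ≠ 0)
    {a : ℝ} (ha : a ∈ J) (heq : f a = g a) : ∀ t ∈ J, f t = g t := by
  have loc : ∀ τ ∈ J, f τ = g τ → f =ᶠ[nhds τ] g := by
    intro τ hτ hfg
    obtain ⟨K, U, hU, hLip⟩ := (vf_contDiffAt (hf τ hτ).2).exists_lipschitzOnWith
    have hU' : U ∈ nhds (g τ) := by rwa [hfg] at hU
    have hJn : ∀ᶠ t in nhds τ, t ∈ J := hJo.mem_nhds hτ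
    have hfc : ∀ᶠ t in nhds τ, f t ∈ U := (hf τ hτ).1.continuousAt.preimage_mem_nhds hU
    have hgc : ∀ᶠ t in nhds τ, g t ∈ U := (hg τ hτ).1.continuousAt.preimage_mem_nhds hU'
    have hf' : ∀ᶠ t in nhds τ,
        HasDerivAt f ((fun _ : ℝ => vf) t (f t)) t ∧ f t ∈ (fun _ : ℝ => U) t := by
      filter_upwards [hJn, hfc] with t ht hU2
      exact ⟨(hf t ht).1, hU2⟩
    have hg' : ∀ᶠ t in nhds τ,
        HasDerivAt g ((fun _ : ℝ => vf) t (g t)) t ∧ g t ∈ (fun _ : ℝ => U) t := by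
      filter_upwards [hJn, hgc] with t ht hU2
      exact ⟨(hg t ht).1, hU2⟩
    exact ODE_solution_unique_of_eventually (Filter.Eventually.of_forall fun _ => hLip) hf' hg' hfg
  set u : Set ℝ := {τ | ∃ V, IsOpen V ∧ τ ∈ V ∧ EqOn f g V} with hu_def
  have hu_open : IsOpen u := by
    apply isOpen_iff_forall_mem_open.mpr
    rintro τ ⟨V, hVo, hτV, hVeq⟩
    exact ⟨V, fun τ' hτ' => ⟨V, hVo, hτ', hVeq⟩, hVo, hτV⟩
  have hu_eq : ∀ τ ∈ u, f τ = g τ := by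
    rintro τ ⟨V, hVo, hτV, hVeq⟩
    exact hVeq hτV
  set v : Set ℝ := J ∩ {t | f t ≠ g t} with hv_def
  have hcont : ContinuousOn (fun t => (f t, g t)) J := by
    intro t ht
    exact ((hf t ht).1.continuousAt.prodMk (hg t ht).1.continuousAt).continuousWithinAt
  have hv_open : IsOpen v := by
    have hdiag : IsOpen {p : (ℝ × ℝ × ℝ × ℝ × ℝ × ℝ) × (ℝ × ℝ × ℝ × ℝ × ℝ × ℝ) | p.1 ≠ p.2} :=
      (isClosed_eq continuous_fst continuous_snd).isOpen_compl
    have := hcont.isOpen_inter_preimage hJo hdiag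
    exact this
  have hmem_u : ∀ τ ∈ J, f τ = g τ → τ ∈ u := by
    intro τ hτ hfg
    obtain ⟨V, hV, hVeq⟩ := Filter.eventuallyEq_iff_exists_mem.mp (loc τ hτ hfg)
    obtain ⟨V', hV'sub, hV'o, hτV'⟩ := mem_nhds_iff.mp hV
    exact ⟨V', hV'o, hτV', fun t ht => hVeq (hV'sub ht)⟩
  have hsub : J ⊆ u ∪ v := by
    intro τ hτ
    by_cases h : f τ = g τ
    · exact Or.inl (hmem_u τ hτ h)
    · exact Or.inr ⟨hτ, h⟩
  have hvempty : J ∩ v = ∅ := by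
    by_contra h
    obtain ⟨τ, hτJ, hτu, hτv⟩ := hJp u v hu_open hv_open hsub
      ⟨a, ha, hmem_u a ha heq⟩ (nonempty_iff_ne_empty.mpr h)
    exact hτv.2 (hu_eq τ hτu)
  intro t ht
  by_contra h
  have hne : (J ∩ v).Nonempty := ⟨t, ht, ⟨ht, h⟩⟩
  exact nonempty_iff_ne_empty.mp hne hvempty

lemma const_on {I : Set ℝ} (hIc : I.OrdConnected) {F : ℝ → ℝ}
    (hF : ∀ t ∈ I, HasDerivAt F 0 t) {a b : ℝ} (ha : a ∈ I) (hb : b ∈ I) : F b = F a := by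
  rcases le_total a b with h | h
  · have hsub : Icc a b ⊆ I := hIc.out ha hb
    have hcont : ContinuousOn F (Icc a b) :=
      fun t ht => (hF t (hsub ht)).continuousAt.continuousWithinAt
    exact constant_of_has_deriv_right_zero hcont
      (fun t ht => (hF t (hsub (Ico_subset_Icc_self ht))).hasDerivWithinAt) b ⟨h, le_refl b⟩
  · have hsub : Icc b a ⊆ I := hIc.out hb ha
    have hcont : ContinuousOn F (Icc b a) :=
      fun t ht => (hF t (hsub ht)).continuousAt.continuousWithinAt
    exact (constant_of_has_deriv_right_zero hcont
      (fun t ht => (hF t (hsub (Ico_subset_Icc_self ht))).hasDerivWithinAt) a ⟨h, le_refl a⟩).symm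

lemma sign_const {z : ℝ → ℝ} {a b : ℝ} (hab : a < b) (hzc : ContinuousOn z (Icc a b))
    (hz : ∀ t ∈ Ioo a b, z t ≠ 0) :
    (∀ t ∈ Ioo a b, 0 < z t) ∨ (∀ t ∈ Ioo a b, z t < 0) := by
  have hm : (a + b) / 2 ∈ Ioo a b := ⟨by linarith, by linarith⟩
  rcases (hz _ hm).lt_or_gt with hneg | hpos
  · right
    intro t ht
    by_contra h
    push_neg at h
    have hpos' : 0 < z t := lt_of_le_of_ne h (Ne.symm (hz t ht))
    have hsub : uIcc t ((a + b) / 2) ⊆ Ioo a b := (ordConnected_Ioo.uIcc_subset ht hm)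
    have hcont : ContinuousOn z (uIcc t ((a + b) / 2)) :=
      hzc.mono (hsub.trans Ioo_subset_Icc_self)
    have h0 : (0:ℝ) ∈ uIcc (z t) (z ((a + b) / 2)) := by
      rw [mem_uIcc]; right; exact ⟨le_of_lt hneg, le_of_lt hpos'⟩
    obtain ⟨c, hcIn, hzc0⟩ := intermediate_value_uIcc hcont h0
    exact hz c (hsub hcIn) hzc0
  · left
    intro t ht
    by_contra h
    push_neg at h
    have hneg' : z t < 0 := lt_of_le_of_ne h (hz t ht)
    have hsub : uIcc t ((a + b) / 2) ⊆ Ioo a b := (ordConnected_Ioo.uIcc_subset ht hm)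
    have hcont : ContinuousOn z (uIcc t ((a + b) / 2)) :=
      hzc.mono (hsub.trans Ioo_subset_Icc_self)
    have h0 : (0:ℝ) ∈ uIcc (z t) (z ((a + b) / 2)) := by
      rw [mem_uIcc]; left; exact ⟨le_of_lt hneg', le_of_lt hpos⟩
    obtain ⟨c, hcIn, hzc0⟩ := intermediate_value_uIcc hcont h0
    exact hz c (hsub hcIn) hzc0

lemma deriv_nonneg_of_pos_right {z : ℝ → ℝ} {d a b : ℝ} (hd : HasDerivAt z d a) (hab : a < b)
    (hz : ∀ t ∈ Ioo a b, 0 < z t) (hza : z a = 0) : 0 ≤ d := by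
  by_contra h
  push_neg at h
  rw [hasDerivAt_iff_tendsto_slope] at hd
  have hlt : ∀ᶠ t in nhdsWithin a {a}ᶜ, slope z a t < 0 := hd.eventually_lt_const h
  have hmono : nhdsWithin a (Ioi a) ≤ nhdsWithin a {a}ᶜ :=
    nhdsWithin_mono a (fun t ht => ne_of_gt ht)
  have hIoo : Ioo a b ∈ nhdsWithin a (Ioi a) := Ioo_mem_nhdsGT_of_mem ⟨le_refl a, hab⟩
  have hcomb : ∀ᶠ t in nhdsWithin a (Ioi a), slope z a t < 0 ∧ t ∈ Ioo a b :=
    (hlt.filter_mono hmono).and (Filter.eventually_of_mem hIoo (fun _ ht => ht))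
  obtain ⟨t, hst, htIoo⟩ := hcomb.exists
  have ht : a < t := htIoo.1
  have : 0 < slope z a t := by
    rw [slope_def_field, hza, sub_zero]
    exact div_pos (hz t htIoo) (by linarith)
  linarith

lemma deriv_nonneg_of_neg_left {z : ℝ → ℝ} {d a b : ℝ} (hd : HasDerivAt z d b) (hab : a < b)
    (hz : ∀ t ∈ Ioo a b, z t < 0) (hzb : z b = 0) : 0 ≤ d := by
  by_contra h
  push_neg at h
  rw [hasDerivAt_iff_tendsto_slope] at hd
  have hlt : ∀ᶠ t in nhdsWithin b {b}ᶜ, slope z b t < 0 := hd.eventually_lt_const h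
  have hmono : nhdsWithin b (Iio b) ≤ nhdsWithin b {b}ᶜ :=
    nhdsWithin_mono b (fun t ht => ne_of_lt ht)
  have hIoo : Ioo a b ∈ nhdsWithin b (Iio b) := Ioo_mem_nhdsLT_of_mem ⟨hab, le_refl b⟩
  have hcomb : ∀ᶠ t in nhdsWithin b (Iio b), slope z b t < 0 ∧ t ∈ Ioo a b :=
    (hlt.filter_mono hmono).and (Filter.eventually_of_mem hIoo (fun _ ht => ht))
  obtain ⟨t, hst, htIoo⟩ := hcomb.exists
  have ht : t < b := htIoo.2
  have : 0 < slope z b t := by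
    rw [slope_def_field, hzb, sub_zero]
    exact div_pos_of_neg_of_neg (hz t htIoo) (by linarith)
  linarith

lemma deriv_nonpos_of_neg_right {z : ℝ → ℝ} {d a b : ℝ} (hd : HasDerivAt z d a) (hab : a < b)
    (hz : ∀ t ∈ Ioo a b, z t < 0) (hza : z a = 0) : d ≤ 0 := by
  have := deriv_nonneg_of_pos_right hd.neg hab (fun t ht => by simpa using (hz t ht)) (by simp [hza])
  linarith

lemma deriv_nonpos_of_pos_left {z : ℝ → ℝ} {d a b : ℝ} (hd : HasDerivAt z d b) (hab : a < b)
    (hz : ∀ t ∈ Ioo a b, 0 < z t) (hzb : z b = 0) : d ≤ 0 := by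
  have := deriv_nonneg_of_neg_left hd.neg hab (fun t ht => by simpa using (hz t ht)) (by simp [hzb])
  linarith

lemma zero_energy_rel (X Y PX PY PZ : ℝ) (hR : 0 < X^2+Y^2)
    (hkh : KH X Y 0 PX PY PZ = 0) :
    (X*PX + Y*PY)^2
      + (2*(-((1/2)*Y*(PX - (1/2)*Y*PZ)) + (1/2)*X*(PY + (1/2)*X*PZ)))^2 = 1/(4*π) := by
  have hsq : Real.sqrt ((X^2+Y^2)^2 + 16*(0:ℝ)^2) = X^2+Y^2 := by
    rw [show (X^2+Y^2)^2+16*(0:ℝ)^2 = (X^2+Y^2)^2 by ring, Real.sqrt_sq hR.le]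
  rw [KH, hsq] at hkh
  have hpi := Real.pi_pos
  have hRne : X^2+Y^2 ≠ 0 := ne_of_gt hR
  field_simp at hkh
  field_simp
  linear_combination (1/2) * hkh

lemma Jdot_eq (X Y Z PX PY PZ W : ℝ) (hW : W ≠ 0) (hQ : (X^2+Y^2)^2 + 16*Z^2 ≠ 0)
    (hW2 : W^2 = (X^2+Y^2)^2 + 16*Z^2) :
    ((PX - (1/2)*Y*PZ) * PX
        + X * (-((1/2) * PZ * (PY + (1/2) * X * PZ) + X * (X^2 + Y^2) / (4 * π * W^3))))
    + ((PY + (1/2)*X*PZ) * PY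
        + Y * (-(-((1/2) * PZ * (PX - (1/2)*Y*PZ)) + Y * (X^2+Y^2) / (4 * π * W^3))))
    + 2 * ((-((1/2)*Y*(PX - (1/2)*Y*PZ)) + (1/2)*X*(PY + (1/2)*X*PZ)) * PZ
        + Z * (-(2*Z/(π*W^3))))
    = 2 * ((1/2) * ((PX - (1/2) * Y * PZ)^2 + (PY + (1/2) * X * PZ)^2) - 1 / (8 * π * W)) := by
  have hpi := Real.pi_ne_zero
  rw [show W^3 = ((X^2+Y^2)^2 + 16*Z^2) * W by rw [← hW2]; ring]
  field_simp
  ring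

lemma Ldot_eq (X Y Z PX PY PZ W : ℝ) (hW : W ≠ 0) :
    ((PX - (1/2)*Y*PZ) * PY
        + X * (-(-((1/2) * PZ * (PX - (1/2)*Y*PZ)) + Y * (X^2+Y^2) / (4 * π * W^3))))
    - ((PY + (1/2)*X*PZ) * PX
        + Y * (-((1/2) * PZ * (PY + (1/2) * X * PZ) + X * (X^2 + Y^2) / (4 * π * W^3))))
    = 0 := by
  have hpi := Real.pi_ne_zero
  field_simp
  ring

set_option maxHeartbeats 4000000 in
/-- **Corollary (quasi-periodicity when `J = 0`).** If the dilation factor is `1`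
(i.e. `s(t₂) = s(t₀)`), then with `φ = θ(t₂) − θ(t₀)` and `T = t₂ − t₀` the orbit is
quasi-periodic: `c(t + T) = ρ_φ(c(t))`. -/
theorem kepler_heisenberg_quasi_periodic
    (I : Set ℝ) (x y z px py pz θ : ℝ → ℝ) (t₀ t₁ t₂ : ℝ)
    (hsol : IsMaximalSolution I x y z px py pz)
    (hH : ∀ t ∈ I, KH (x t) (y t) (z t) (px t) (py t) (pz t) = 0)
    (hxy : ∀ t ∈ I, (x t, y t) ≠ (0, 0))
    (hθcont : ContinuousOn θ I)
    (hθ : ∀ t ∈ I, x t = Real.sqrt ((x t)^2 + (y t)^2) * Real.cos (θ t) ∧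
                   y t = Real.sqrt ((x t)^2 + (y t)^2) * Real.sin (θ t))
    (ht01 : t₀ < t₁) (ht12 : t₁ < t₂)
    (ht₀I : t₀ ∈ I) (ht₁I : t₁ ∈ I) (ht₂I : t₂ ∈ I)
    (hz₀ : z t₀ = 0) (hz₁ : z t₁ = 0) (hz₂ : z t₂ = 0)
    (hconsec : ∀ t, ((t₀ < t ∧ t < t₁) ∨ (t₁ < t ∧ t < t₂)) → z t ≠ 0)
    (hs : sCoord (x t₂) (y t₂) (z t₂) = sCoord (x t₀) (y t₀) (z t₀))
    (φ T : ℝ) (hφ : φ = θ t₂ - θ t₀) (hT : T = t₂ - t₀) :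
    ∀ t ∈ I, t + T ∈ I →
      (x (t + T), y (t + T), z (t + T), px (t + T), py (t + T), pz (t + T)) =
        rot φ (x t, y t, z t, px t, py t, pz t) := by
  classical
  obtain ⟨⟨hIo, hIc, hIne, hne0, heqs⟩, hmax⟩ := hsol
  have hr2 : ∀ t ∈ I, 0 < (x t)^2 + (y t)^2 := by
    intro t ht
    by_contra hcon
    push_neg at hcon
    have hx0 : x t = 0 := by nlinarith [sq_nonneg (x t), sq_nonneg (y t)]
    have hy0 : y t = 0 := by nlinarith [sq_nonneg (x t), sq_nonneg (y t)]
    exact hxy t ht (by rw [hx0, hy0])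
  have hQne : ∀ t ∈ I, ((x t)^2 + (y t)^2)^2 + 16*(z t)^2 ≠ 0 := by
    intro t ht
    have := hr2 t ht
    positivity
  have hWne : ∀ t ∈ I, Real.sqrt (((x t)^2 + (y t)^2)^2 + 16 * (z t)^2) ≠ 0 := by
    intro t ht
    exact ne_of_gt (Real.sqrt_pos.mpr (lt_of_le_of_ne (by positivity) (Ne.symm (hQne t ht))))
  have hder : ∀ t ∈ I,
      HasDerivAt x (px t - (1/2) * y t * pz t) t ∧
      HasDerivAt y (py t + (1/2) * x t * pz t) t ∧
      HasDerivAt z (-((1/2) * y t * (px t - (1/2) * y t * pz t)) +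
        (1/2) * x t * (py t + (1/2) * x t * pz t)) t ∧
      HasDerivAt px (-((1/2) * pz t * (py t + (1/2) * x t * pz t) +
        x t * ((x t)^2 + (y t)^2) /
          (4 * π * (Real.sqrt (((x t)^2 + (y t)^2)^2 + 16 * (z t)^2))^3))) t ∧
      HasDerivAt py (-(-((1/2) * pz t * (px t - (1/2) * y t * pz t)) +
        y t * ((x t)^2 + (y t)^2) /
          (4 * π * (Real.sqrt (((x t)^2 + (y t)^2)^2 + 16 * (z t)^2))^3))) t ∧
      HasDerivAt pz (-(2 * z t /
        (π * (Real.sqrt (((x t)^2 + (y t)^2)^2 + 16 * (z t)^2))^3))) t := by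
    intro t ht
    obtain ⟨h1, h2, h3, h4, h5, h6⟩ := heqs t ht
    rw [(KH_hasDerivAt_px (x t) (y t) (z t) (px t) (py t) (pz t)).deriv] at h1
    rw [(KH_hasDerivAt_py (x t) (y t) (z t) (px t) (py t) (pz t)).deriv] at h2
    rw [(KH_hasDerivAt_pz (x t) (y t) (z t) (px t) (py t) (pz t)).deriv] at h3
    rw [(KH_hasDerivAt_x (x t) (y t) (z t) (px t) (py t) (pz t) (hQne t ht)).deriv] at h4
    rw [(KH_hasDerivAt_y (x t) (y t) (z t) (px t) (py t) (pz t) (hQne t ht)).deriv] at h5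
    rw [(KH_hasDerivAt_z (x t) (y t) (z t) (px t) (py t) (pz t) (hQne t ht)).deriv] at h6
    exact ⟨h1, h2, h3, h4, h5, h6⟩
  have hJd : ∀ t ∈ I, HasDerivAt (fun u => x u * px u + y u * py u + 2 * (z u * pz u)) 0 t := by
    intro t ht
    obtain ⟨h1, h2, h3, h4, h5, h6⟩ := hder t ht
    have h := ((h1.mul h4).add (h2.mul h5)).add ((h3.mul h6).const_mul 2)
    refine h.congr_deriv ?_
    have hW2 : (Real.sqrt (((x t)^2 + (y t)^2)^2 + 16 * (z t)^2))^2
        = ((x t)^2 + (y t)^2)^2 + 16 * (z t)^2 := Real.sq_sqrt (by positivity)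
    have hkh := hH t ht
    rw [KH] at hkh
    rw [Jdot_eq (x t) (y t) (z t) (px t) (py t) (pz t)
      (Real.sqrt (((x t)^2 + (y t)^2)^2 + 16 * (z t)^2)) (hWne t ht) (hQne t ht) hW2, hkh]
    norm_num
  have hLd : ∀ t ∈ I, HasDerivAt (fun u => x u * py u - y u * px u) 0 t := by
    intro t ht
    obtain ⟨h1, h2, h3, h4, h5, h6⟩ := hder t ht
    have h := (h1.mul h5).sub (h2.mul h4)
    refine h.congr_deriv ?_
    rw [Ldot_eq (x t) (y t) (z t) (px t) (py t) (pz t)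
      (Real.sqrt (((x t)^2 + (y t)^2)^2 + 16 * (z t)^2)) (hWne t ht)]
  have hJ02 : x t₂ * px t₂ + y t₂ * py t₂ + 2 * (z t₂ * pz t₂)
      = x t₀ * px t₀ + y t₀ * py t₀ + 2 * (z t₀ * pz t₀) := const_on hIc hJd ht₀I ht₂I
  have hJ12 : x t₁ * px t₁ + y t₁ * py t₁ + 2 * (z t₁ * pz t₁)
      = x t₀ * px t₀ + y t₀ * py t₀ + 2 * (z t₀ * pz t₀) := const_on hIc hJd ht₀I ht₁I
  have hL02 : x t₂ * py t₂ - y t₂ * px t₂ = x t₀ * py t₀ - y t₀ * px t₀ :=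
    const_on hIc hLd ht₀I ht₂I
  rw [hz₀, hz₂] at hJ02
  rw [hz₀, hz₁] at hJ12
  simp only [zero_mul, mul_zero, add_zero] at hJ02 hJ12
  have hR0pos : 0 < (x t₀)^2 + (y t₀)^2 := hr2 t₀ ht₀I
  have hR2pos : 0 < (x t₂)^2 + (y t₂)^2 := hr2 t₂ ht₂I
  have hsR : (x t₂)^2 + (y t₂)^2 = (x t₀)^2 + (y t₀)^2 := by
    have h2 := hs
    rw [sCoord, sCoord, hz₂, hz₀,
      show ((x t₂)^2 + (y t₂)^2)^2 + 16*(0:ℝ)^2 = ((x t₂)^2+(y t₂)^2)^2 from by ring,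
      show ((x t₀)^2 + (y t₀)^2)^2 + 16*(0:ℝ)^2 = ((x t₀)^2+(y t₀)^2)^2 from by ring] at h2
    have hlog : Real.log (((x t₂)^2+(y t₂)^2)^2) = Real.log (((x t₀)^2+(y t₀)^2)^2) := by
      linarith
    have hsq : ((x t₂)^2+(y t₂)^2)^2 = ((x t₀)^2+(y t₀)^2)^2 := by
      rw [← Real.exp_log (show (0:ℝ) < ((x t₂)^2+(y t₂)^2)^2 from by positivity),
          ← Real.exp_log (show (0:ℝ) < ((x t₀)^2+(y t₀)^2)^2 from by positivity), hlog]
    nlinarith [hR0pos, hR2pos]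
  obtain ⟨-, -, hd0, -, -, -⟩ := hder t₀ ht₀I
  obtain ⟨-, -, hd1, -, -, -⟩ := hder t₁ ht₁I
  obtain ⟨-, -, hd2, -, -, -⟩ := hder t₂ ht₂I
  have hE0 := zero_energy_rel (x t₀) (y t₀) (px t₀) (py t₀) (pz t₀) hR0pos
    (by have h := hH t₀ ht₀I; rwa [hz₀] at h)
  have hE1 := zero_energy_rel (x t₁) (y t₁) (px t₁) (py t₁) (pz t₁) (hr2 t₁ ht₁I)
    (by have h := hH t₁ ht₁I; rwa [hz₁] at h)
  have hE2 := zero_energy_rel (x t₂) (y t₂) (px t₂) (py t₂) (pz t₂) hR2pos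
    (by have h := hH t₂ ht₂I; rwa [hz₂] at h)
  set D0 := -((1/2) * y t₀ * (px t₀ - (1/2) * y t₀ * pz t₀))
    + (1/2) * x t₀ * (py t₀ + (1/2) * x t₀ * pz t₀) with hD0def
  set D1 := -((1/2) * y t₁ * (px t₁ - (1/2) * y t₁ * pz t₁))
    + (1/2) * x t₁ * (py t₁ + (1/2) * x t₁ * pz t₁) with hD1def
  set D2 := -((1/2) * y t₂ * (px t₂ - (1/2) * y t₂ * pz t₂))
    + (1/2) * x t₂ * (py t₂ + (1/2) * x t₂ * pz t₂) with hD2def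
  clear_value D0 D1 D2
  rw [hJ12] at hE1
  rw [hJ02] at hE2
  have h41 : (2*D1)^2 = (2*D0)^2 := by linear_combination hE1 - hE0
  have h42 : (2*D2)^2 = (2*D0)^2 := by linear_combination hE2 - hE0
  have hsq01 : D1^2 = D0^2 := by linear_combination (1/4) * h41
  have hsq02 : D2^2 = D0^2 := by linear_combination (1/4) * h42
  have hzc : ContinuousOn z I :=
    fun t ht => ((hder t ht).2.2.1).continuousAt.continuousWithinAt
  have hsub01 : Icc t₀ t₁ ⊆ I := hIc.out ht₀I ht₁I
  have hsub12 : Icc t₁ t₂ ⊆ I := hIc.out ht₁I ht₂I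
  have hsgn1 := sign_const ht01 (hzc.mono hsub01) (fun t ht => hconsec t (Or.inl ⟨ht.1, ht.2⟩))
  have hsgn2 := sign_const ht12 (hzc.mono hsub12) (fun t ht => hconsec t (Or.inr ⟨ht.1, ht.2⟩))
  have hDD : D2 = D0 := by
    rcases hsgn1 with hp1 | hn1 <;> rcases hsgn2 with hp2 | hn2
    · have ha : D1 ≤ 0 := deriv_nonpos_of_pos_left hd1 ht01 hp1 hz₁
      have hb : 0 ≤ D1 := deriv_nonneg_of_pos_right hd1 ht12 hp2 hz₁
      have h0 : D1 = 0 := le_antisymm ha hb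
      have h00 : D0 = 0 := by
        have hD0 : D0^2 = 0 := by rw [← hsq01, h0]; ring
        exact sq_eq_zero_iff.mp hD0
      have h22 : D2 = 0 := by
        have hD2 : D2^2 = 0 := by rw [hsq02, h00]; ring
        exact sq_eq_zero_iff.mp hD2
      rw [h22, h00]
    · have ha : 0 ≤ D0 := deriv_nonneg_of_pos_right hd0 ht01 hp1 hz₀
      have hb : 0 ≤ D2 := deriv_nonneg_of_neg_left hd2 ht12 hn2 hz₂
      have hfac : (D2 - D0) * (D2 + D0) = 0 := by linear_combination hsq02
      rcases mul_eq_zero.mp hfac with h | h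
      · linarith
      · linarith
    · have ha : D0 ≤ 0 := deriv_nonpos_of_neg_right hd0 ht01 hn1 hz₀
      have hb : D2 ≤ 0 := deriv_nonpos_of_pos_left hd2 ht12 hp2 hz₂
      have hfac : (D2 - D0) * (D2 + D0) = 0 := by linear_combination hsq02
      rcases mul_eq_zero.mp hfac with h | h
      · linarith
      · linarith
    · have ha : 0 ≤ D1 := deriv_nonneg_of_neg_left hd1 ht01 hn1 hz₁
      have hb : D1 ≤ 0 := deriv_nonpos_of_neg_right hd1 ht12 hn2 hz₁
      have h0 : D1 = 0 := le_antisymm hb ha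
      have h00 : D0 = 0 := by
        have hD0 : D0^2 = 0 := by rw [← hsq01, h0]; ring
        exact sq_eq_zero_iff.mp hD0
      have h22 : D2 = 0 := by
        have hD2 : D2^2 = 0 := by rw [hsq02, h00]; ring
        exact sq_eq_zero_iff.mp hD2
      rw [h22, h00]
  have hpzeq : pz t₂ = pz t₀ := by
    have h20 : 2*D0 = (x t₀ * py t₀ - y t₀ * px t₀)
        + (1/2) * pz t₀ * ((x t₀)^2 + (y t₀)^2) := by rw [hD0def]; ring
    have h22 : 2*D2 = (x t₂ * py t₂ - y t₂ * px t₂)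
        + (1/2) * pz t₂ * ((x t₂)^2 + (y t₂)^2) := by rw [hD2def]; ring
    rw [hDD] at h22
    rw [hsR] at h22
    have hkey : pz t₂ * ((x t₀)^2 + (y t₀)^2) = pz t₀ * ((x t₀)^2 + (y t₀)^2) := by
      linear_combination (-2) * h22 + 2 * h20 - 2 * hL02
    exact mul_right_cancel₀ (ne_of_gt hR0pos) hkey
  obtain ⟨hx0eq, hy0eq⟩ := hθ t₀ ht₀I
  obtain ⟨hx2eq, hy2eq⟩ := hθ t₂ ht₂I
  have hθ2 : θ t₂ = θ t₀ + φ := by rw [hφ]; ring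
  have hx2' : x t₂ = Real.sqrt ((x t₀)^2 + (y t₀)^2) * Real.cos (θ t₂) := by rw [hx2eq, hsR]
  have hy2' : y t₂ = Real.sqrt ((x t₀)^2 + (y t₀)^2) * Real.sin (θ t₂) := by rw [hy2eq, hsR]
  have hcs := Real.sin_sq_add_cos_sq φ
  have hX2 : x t₂ = x t₀ * Real.cos φ - y t₀ * Real.sin φ := by
    rw [hx2', hθ2, Real.cos_add]
    linear_combination (-(Real.cos φ)) * hx0eq + (Real.sin φ) * hy0eq
  have hY2 : y t₂ = x t₀ * Real.sin φ + y t₀ * Real.cos φ := by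
    rw [hy2', hθ2, Real.sin_add]
    linear_combination (-(Real.sin φ)) * hx0eq + (-(Real.cos φ)) * hy0eq
  have e1' : x t₂ * (px t₀ * Real.cos φ - py t₀ * Real.sin φ)
      + y t₂ * (px t₀ * Real.sin φ + py t₀ * Real.cos φ)
      = x t₀ * px t₀ + y t₀ * py t₀ := by
    rw [hX2, hY2]
    linear_combination (x t₀ * px t₀ + y t₀ * py t₀) * hcs
  have e2' : x t₂ * (px t₀ * Real.sin φ + py t₀ * Real.cos φ)
      - y t₂ * (px t₀ * Real.cos φ - py t₀ * Real.sin φ)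
      = x t₀ * py t₀ - y t₀ * px t₀ := by
    rw [hX2, hY2]
    linear_combination (x t₀ * py t₀ - y t₀ * px t₀) * hcs
  have hfac1 : ((x t₂)^2 + (y t₂)^2)
      * (px t₂ - (px t₀ * Real.cos φ - py t₀ * Real.sin φ)) = 0 := by
    linear_combination (x t₂) * hJ02 - (x t₂) * e1' - (y t₂) * hL02 + (y t₂) * e2'
  have hfac2 : ((x t₂)^2 + (y t₂)^2)
      * (py t₂ - (px t₀ * Real.sin φ + py t₀ * Real.cos φ)) = 0 := by
    linear_combination (y t₂) * hJ02 - (y t₂) * e1' + (x t₂) * hL02 - (x t₂) * e2'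
  have hPX2 : px t₂ = px t₀ * Real.cos φ - py t₀ * Real.sin φ := by
    have h := (mul_eq_zero.mp hfac1).resolve_left (ne_of_gt hR2pos)
    linarith
  have hPY2 : py t₂ = px t₀ * Real.sin φ + py t₀ * Real.cos φ := by
    have h := (mul_eq_zero.mp hfac2).resolve_left (ne_of_gt hR2pos)
    linarith
  have hpt : (x t₂, y t₂, z t₂, px t₂, py t₂, pz t₂)
      = rot φ (x t₀, y t₀, z t₀, px t₀, py t₀, pz t₀) := by
    simp only [rot, Prod.mk.injEq]
    exact ⟨hX2, hY2, by rw [hz₂, hz₀], hPX2, hPY2, hpzeq⟩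
  have hcurve : ∀ t ∈ I, HasDerivAt (fun u => (x u, y u, z u, px u, py u, pz u))
      (vf (x t, y t, z t, px t, py t, pz t)) t := by
    intro t ht
    obtain ⟨h1, h2, h3, h4, h5, h6⟩ := hder t ht
    exact h1.prodMk (h2.prodMk (h3.prodMk (h4.prodMk (h5.prodMk h6))))
  set J2 : Set ℝ := I ∩ {u : ℝ | u + T ∈ I} with hJ2def
  have hJ2o : IsOpen J2 := hIo.inter (hIo.preimage (continuous_id.add continuous_const))
  have hJ2c : OrdConnected J2 := by
    constructor
    rintro u1 ⟨h1I, h1T⟩ u2 ⟨h2I, h2T⟩ u hu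
    exact ⟨hIc.out h1I h2I hu,
      hIc.out h1T h2T ⟨add_le_add_left hu.1 T, add_le_add_left hu.2 T⟩⟩
  have ht₀J2 : t₀ ∈ J2 := by
    refine ⟨ht₀I, ?_⟩
    show t₀ + T ∈ I
    rw [hT, show t₀ + (t₂ - t₀) = t₂ from by ring]
    exact ht₂I
  have hff : ∀ u ∈ J2,
      HasDerivAt (fun v : ℝ => (x (v+T), y (v+T), z (v+T), px (v+T), py (v+T), pz (v+T)))
        (vf (x (u+T), y (u+T), z (u+T), px (u+T), py (u+T), pz (u+T))) u ∧
      (((x (u+T))^2 + (y (u+T))^2)^2 + 16 * (z (u+T))^2 ≠ 0) := by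
    intro u hu
    constructor
    · have hshift : HasDerivAt (fun v : ℝ => v + T) 1 u := (hasDerivAt_id u).add_const T
      have h := HasDerivAt.scomp (𝕜 := ℝ) u (hcurve (u+T) hu.2) hshift
      exact h.congr_deriv (one_smul ℝ _)
    · exact hQne (u+T) hu.2
  have hrotsq : ∀ u : ℝ,
      (x u * Real.cos φ - y u * Real.sin φ)^2 + (x u * Real.sin φ + y u * Real.cos φ)^2
      = (x u)^2 + (y u)^2 := fun u => by linear_combination ((x u)^2 + (y u)^2) * hcs
  have hgg : ∀ u ∈ J2,
      HasDerivAt (fun v : ℝ => rot φ (x v, y v, z v, px v, py v, pz v))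
        (vf (rot φ (x u, y u, z u, px u, py u, pz u))) u ∧
      ((((x u * Real.cos φ - y u * Real.sin φ))^2
        + ((x u * Real.sin φ + y u * Real.cos φ))^2)^2 + 16 * (z u)^2 ≠ 0) := by
    intro u hu
    obtain ⟨h1, h2, h3, h4, h5, h6⟩ := hder u hu.1
    constructor
    · rw [rot_vf]
      simp only [rot]
      exact ((h1.mul_const _).sub (h2.mul_const _)).prodMk
        (((h1.mul_const _).add (h2.mul_const _)).prodMk
          (h3.prodMk (((h4.mul_const _).sub (h5.mul_const _)).prodMk
            (((h4.mul_const _).add (h5.mul_const _)).prodMk h6))))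
    · rw [hrotsq u]
      exact hQne u hu.1
  have heq0 : (x (t₀+T), y (t₀+T), z (t₀+T), px (t₀+T), py (t₀+T), pz (t₀+T))
      = rot φ (x t₀, y t₀, z t₀, px t₀, py t₀, pz t₀) := by
    rw [show t₀ + T = t₂ from by rw [hT]; ring]
    exact hpt
  intro t ht htT
  exact uniq hJ2o hJ2c.isPreconnected
    (f := fun v : ℝ => (x (v+T), y (v+T), z (v+T), px (v+T), py (v+T), pz (v+T)))
    (g := fun v : ℝ => rot φ (x v, y v, z v, px v, py v, pz v))
    hff hgg ht₀J2 heq0 t ⟨ht, htT⟩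
end

section
/- Rotations and dilations map solutions to solutions: if c : I → ℝ^6 is a solution of the Kepler–Heisenberg Hamilton equations, then (a) for every φ ∈ ℝ, t ↦ ρ_φ(c(t)) is a solution on I; and (b) for every λ > 0, the curve t ↦ δ_λ(c(λ^{−2}·t)) is a solution on the rescaled interval {t : λ^{−2}·t ∈ I}. -/
open Real Set

noncomputable def Qf (x y z : ℝ) : ℝ := (x^2 + y^2)^2 + 16 * z^2
noncomputable def Pf (x y z : ℝ) : ℝ := 16 * π * (Qf x y z * Real.sqrt (Qf x y z))

lemma Qf_pos {x y z : ℝ} (h : (x, y, z) ≠ (0, 0, 0)) : 0 < Qf x y z := by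
  have h' : x ≠ 0 ∨ y ≠ 0 ∨ z ≠ 0 := by
    by_contra hc
    push_neg at hc
    exact h (by simp [hc.1, hc.2.1, hc.2.2])
  unfold Qf
  rcases h' with hx | hy | hz
  · positivity
  · positivity
  · positivity

lemma Pf_pos {x y z : ℝ} (h : (x, y, z) ≠ (0, 0, 0)) : 0 < Pf x y z := by
  have hQ := Qf_pos h
  have hs : 0 < Real.sqrt (Qf x y z) := Real.sqrt_pos.mpr hQ
  have hπ := Real.pi_pos
  unfold Pf; positivity

noncomputable def KHx (x y z px py pz : ℝ) : ℝ :=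
  (py + (1/2) * x * pz) * ((1/2) * pz) + 4 * x * (x^2 + y^2) / Pf x y z
noncomputable def KHy (x y z px py pz : ℝ) : ℝ :=
  (px - (1/2) * y * pz) * (-((1/2) * pz)) + 4 * y * (x^2 + y^2) / Pf x y z
noncomputable def KHz (x y z : ℝ) : ℝ := 32 * z / Pf x y z
noncomputable def KHpx (y px pz : ℝ) : ℝ := px - (1/2) * y * pz
noncomputable def KHpy (x py pz : ℝ) : ℝ := py + (1/2) * x * pz
noncomputable def KHpz (x y px py pz : ℝ) : ℝ :=
  (px - (1/2) * y * pz) * (-((1/2) * y)) + (py + (1/2) * x * pz) * ((1/2) * x)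

lemma hasDerivAt_KH_px (x y z px py pz : ℝ) :
    HasDerivAt (fun a => KH x y z a py pz) (KHpx y px pz) px := by
  unfold KH KHpx
  have h : HasDerivAt (fun a : ℝ => (1/2) * ((a - (1/2)*y*pz)^2 + (py + (1/2)*x*pz)^2)
      - 1 / (8 * π * Real.sqrt ((x^2+y^2)^2 + 16*z^2)))
      ((1/2) * (2 * (px - (1/2)*y*pz)^1 * 1)) px :=
    ((((((hasDerivAt_id px).sub_const _).pow 2).add_const _).const_mul (1/2)).sub_const _)
  convert h using 1
  ring

lemma hasDerivAt_KH_py (x y z px py pz : ℝ) :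
    HasDerivAt (fun a => KH x y z px a pz) (KHpy x py pz) py := by
  unfold KH KHpy
  have h : HasDerivAt (fun a : ℝ => (1/2) * ((px - (1/2)*y*pz)^2 + (a + (1/2)*x*pz)^2)
      - 1 / (8 * π * Real.sqrt ((x^2+y^2)^2 + 16*z^2)))
      ((1/2) * (2 * (py + (1/2)*x*pz)^1 * 1)) py :=
    (((((((hasDerivAt_id py).add_const _).pow 2).const_add _).const_mul (1/2)).sub_const _))
  convert h using 1
  ring

lemma hasDerivAt_KH_pz (x y z px py pz : ℝ) :
    HasDerivAt (fun a => KH x y z px py a) (KHpz x y px py pz) pz := by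
  unfold KH KHpz
  have h1 : HasDerivAt (fun a : ℝ => px - (1/2)*y*a) (-((1/2)*y)) pz := by
    simpa using (((hasDerivAt_id pz).const_mul ((1/2)*y)).const_sub px)
  have h2 : HasDerivAt (fun a : ℝ => py + (1/2)*x*a) ((1/2)*x) pz := by
    simpa using (((hasDerivAt_id pz).const_mul ((1/2)*x)).const_add py)
  have h : HasDerivAt (fun a : ℝ => (1/2) * ((px - (1/2)*y*a)^2 + (py + (1/2)*x*a)^2)
      - 1 / (8 * π * Real.sqrt ((x^2+y^2)^2 + 16*z^2)))
      ((1/2) * ((2 * (px - (1/2)*y*pz)^1 * (-((1/2)*y))) + (2 * (py + (1/2)*x*pz)^1 * ((1/2)*x)))) pz :=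
    (((h1.pow 2).add (h2.pow 2)).const_mul (1/2)).sub_const _
  convert h using 1
  ring

lemma hasDerivAt_KH_x (x y z px py pz : ℝ) (h : (x, y, z) ≠ (0, 0, 0)) :
    HasDerivAt (fun a => KH a y z px py pz) (KHx x y z px py pz) x := by
  have hQ := Qf_pos h
  have hQ' : (x^2+y^2)^2 + 16*z^2 ≠ 0 := ne_of_gt hQ
  have hs : 0 < Real.sqrt ((x^2+y^2)^2 + 16*z^2) := Real.sqrt_pos.mpr hQ
  unfold KH KHx
  have hq : HasDerivAt (fun a : ℝ => (a^2+y^2)^2 + 16*z^2) (2*(x^2+y^2)^1*(2*x^1)) x := by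
    exact (((hasDerivAt_pow 2 x).add_const (y^2)).pow 2).add_const _
  have hsq : HasDerivAt (fun a : ℝ => Real.sqrt ((a^2+y^2)^2 + 16*z^2))
      (1 / (2 * Real.sqrt ((x^2+y^2)^2 + 16*z^2)) * (2*(x^2+y^2)^1*(2*x^1))) x :=
    (Real.hasDerivAt_sqrt hQ').comp x hq
  have h8 : HasDerivAt (fun a : ℝ => 8 * π * Real.sqrt ((a^2+y^2)^2 + 16*z^2))
      (8 * π * (1 / (2 * Real.sqrt ((x^2+y^2)^2 + 16*z^2)) * (2*(x^2+y^2)^1*(2*x^1)))) x :=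
    hsq.const_mul _
  have hne : 8 * π * Real.sqrt ((x^2+y^2)^2 + 16*z^2) ≠ 0 := by
    have := Real.pi_pos; positivity
  have hinv := h8.inv hne
  have hk : HasDerivAt (fun a : ℝ => (1/2) * ((px - (1/2)*y*pz)^2 + (py + (1/2)*a*pz)^2))
      ((1/2) * (2 * (py + (1/2)*x*pz)^1 * ((1/2)*pz))) x := by
    have h2 : HasDerivAt (fun a : ℝ => py + (1/2)*a*pz) ((1/2)*pz) x := by
      have := (((hasDerivAt_id x).const_mul ((1/2):ℝ)).mul_const pz).const_add py
      simpa using this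
    exact (((h2.pow 2).const_add _).const_mul (1/2))
  have htot := hk.sub hinv
  have : HasDerivAt (fun a => (1/2) * ((px - (1/2)*y*pz)^2 + (py + (1/2)*a*pz)^2)
      - 1 / (8 * π * Real.sqrt ((a^2+y^2)^2 + 16*z^2)))
      ((1/2) * (2 * (py + (1/2)*x*pz)^1 * ((1/2)*pz))
        - -(8 * π * (1 / (2 * Real.sqrt ((x^2+y^2)^2 + 16*z^2)) * (2*(x^2+y^2)^1*(2*x^1))))
          / (8 * π * Real.sqrt ((x^2+y^2)^2 + 16*z^2))^2) x := by
    exact htot.congr_of_eventuallyEq (Filter.Eventually.of_forall fun a => by simp [one_div])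
  convert this using 1
  unfold Pf Qf
  have hπ : π ≠ 0 := ne_of_gt Real.pi_pos
  set S := Real.sqrt ((x^2+y^2)^2 + 16*z^2) with hSdef
  have hS2 : S^2 = (x^2+y^2)^2 + 16*z^2 := Real.sq_sqrt hQ.le
  have hSne : S ≠ 0 := ne_of_gt hs
  rw [show ((x:ℝ)^2+y^2)^2 + 16*z^2 = S^2 from hS2.symm]
  field_simp
  ring

lemma hasDerivAt_KH_y (x y z px py pz : ℝ) (h : (x, y, z) ≠ (0, 0, 0)) :
    HasDerivAt (fun a => KH x a z px py pz) (KHy x y z px py pz) y := by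
  have hQ := Qf_pos h
  have hQ' : (x^2+y^2)^2 + 16*z^2 ≠ 0 := ne_of_gt hQ
  have hs : 0 < Real.sqrt ((x^2+y^2)^2 + 16*z^2) := Real.sqrt_pos.mpr hQ
  unfold KH KHy
  have hq : HasDerivAt (fun a : ℝ => (x^2+a^2)^2 + 16*z^2) (2*(x^2+y^2)^1*(2*y^1)) y :=
    (((hasDerivAt_pow 2 y).const_add (x^2)).pow 2).add_const _
  have hsq : HasDerivAt (fun a : ℝ => Real.sqrt ((x^2+a^2)^2 + 16*z^2))
      (1 / (2 * Real.sqrt ((x^2+y^2)^2 + 16*z^2)) * (2*(x^2+y^2)^1*(2*y^1))) y :=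
    (Real.hasDerivAt_sqrt hQ').comp y hq
  have h8 := hsq.const_mul (8 * π)
  have hne : 8 * π * Real.sqrt ((x^2+y^2)^2 + 16*z^2) ≠ 0 := by
    have := Real.pi_pos; positivity
  have hinv := h8.inv hne
  have hk : HasDerivAt (fun a : ℝ => (1/2) * ((px - (1/2)*a*pz)^2 + (py + (1/2)*x*pz)^2))
      ((1/2) * (2 * (px - (1/2)*y*pz)^1 * (-((1/2)*pz)))) y := by
    have h2 : HasDerivAt (fun a : ℝ => px - (1/2)*a*pz) (-((1/2)*pz)) y := by
      have := ((((hasDerivAt_id y).const_mul ((1/2):ℝ)).mul_const pz).const_sub px)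
      simpa using this
    exact (((h2.pow 2).add_const _).const_mul (1/2))
  have htot := hk.sub hinv
  have hmain : HasDerivAt (fun a => (1/2) * ((px - (1/2)*a*pz)^2 + (py + (1/2)*x*pz)^2)
      - 1 / (8 * π * Real.sqrt ((x^2+a^2)^2 + 16*z^2)))
      ((1/2) * (2 * (px - (1/2)*y*pz)^1 * (-((1/2)*pz)))
        - -(8 * π * (1 / (2 * Real.sqrt ((x^2+y^2)^2 + 16*z^2)) * (2*(x^2+y^2)^1*(2*y^1))))
          / (8 * π * Real.sqrt ((x^2+y^2)^2 + 16*z^2))^2) y := by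
    exact htot.congr_of_eventuallyEq (Filter.Eventually.of_forall fun a => by simp [one_div])
  convert hmain using 1
  unfold Pf Qf
  have hπ : π ≠ 0 := ne_of_gt Real.pi_pos
  set S := Real.sqrt ((x^2+y^2)^2 + 16*z^2) with hSdef
  have hS2 : S^2 = (x^2+y^2)^2 + 16*z^2 := Real.sq_sqrt hQ.le
  have hSne : S ≠ 0 := ne_of_gt hs
  rw [show ((x:ℝ)^2+y^2)^2 + 16*z^2 = S^2 from hS2.symm]
  field_simp
  ring

lemma hasDerivAt_KH_z (x y z px py pz : ℝ) (h : (x, y, z) ≠ (0, 0, 0)) :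
    HasDerivAt (fun a => KH x y a px py pz) (KHz x y z) z := by
  have hQ := Qf_pos h
  have hQ' : (x^2+y^2)^2 + 16*z^2 ≠ 0 := ne_of_gt hQ
  have hs : 0 < Real.sqrt ((x^2+y^2)^2 + 16*z^2) := Real.sqrt_pos.mpr hQ
  unfold KH KHz
  have hq : HasDerivAt (fun a : ℝ => (x^2+y^2)^2 + 16*a^2) (16 * (2*z^1)) z := by
    exact ((hasDerivAt_pow 2 z).const_mul 16).const_add _
  have hsq : HasDerivAt (fun a : ℝ => Real.sqrt ((x^2+y^2)^2 + 16*a^2))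
      (1 / (2 * Real.sqrt ((x^2+y^2)^2 + 16*z^2)) * (16 * (2*z^1))) z :=
    (Real.hasDerivAt_sqrt hQ').comp z hq
  have h8 := hsq.const_mul (8 * π)
  have hne : 8 * π * Real.sqrt ((x^2+y^2)^2 + 16*z^2) ≠ 0 := by
    have := Real.pi_pos; positivity
  have hinv := h8.inv hne
  have htot := hinv.const_sub ((1/2) * ((px - (1/2)*y*pz)^2 + (py + (1/2)*x*pz)^2))
  have hmain : HasDerivAt (fun a => (1/2) * ((px - (1/2)*y*pz)^2 + (py + (1/2)*x*pz)^2)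
      - 1 / (8 * π * Real.sqrt ((x^2+y^2)^2 + 16*a^2)))
      (-(-(8 * π * (1 / (2 * Real.sqrt ((x^2+y^2)^2 + 16*z^2)) * (16 * (2*z^1))))
          / (8 * π * Real.sqrt ((x^2+y^2)^2 + 16*z^2))^2)) z := by
    simpa [one_div] using htot
  convert hmain using 1
  unfold Pf Qf
  have hπ : π ≠ 0 := ne_of_gt Real.pi_pos
  set S := Real.sqrt ((x^2+y^2)^2 + 16*z^2) with hSdef
  have hS2 : S^2 = (x^2+y^2)^2 + 16*z^2 := Real.sq_sqrt hQ.le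
  have hSne : S ≠ 0 := ne_of_gt hs
  rw [show ((x:ℝ)^2+y^2)^2 + 16*z^2 = S^2 from hS2.symm]
  field_simp
  ring

-- rotation invariance lemmas
lemma rot_sq (x y φ : ℝ) :
    (x * Real.cos φ - y * Real.sin φ)^2 + (x * Real.sin φ + y * Real.cos φ)^2 = x^2 + y^2 := by
  have h := sin_sq_add_cos_sq φ
  linear_combination (x^2 + y^2) * h

lemma Pf_rot (x y z φ : ℝ) :
    Pf (x * Real.cos φ - y * Real.sin φ) (x * Real.sin φ + y * Real.cos φ) z = Pf x y z := by
  unfold Pf Qf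
  rw [rot_sq]

lemma rot_ne {x y z : ℝ} (φ : ℝ) (h : (x, y, z) ≠ (0, 0, 0)) :
    (x * Real.cos φ - y * Real.sin φ, x * Real.sin φ + y * Real.cos φ, z) ≠ (0, 0, 0) := by
  intro hc
  simp only [Prod.mk.injEq] at hc
  obtain ⟨h1, h2, h3⟩ := hc
  have hpy := sin_sq_add_cos_sq φ
  have hx : x = 0 := by linear_combination Real.cos φ * h1 + Real.sin φ * h2 - x * hpy
  have hy : y = 0 := by linear_combination Real.cos φ * h2 - Real.sin φ * h1 - y * hpy
  exact h (by simp [hx, hy, h3])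

lemma KHpx_rot (x y px py pz φ : ℝ) :
    KHpx (x * Real.sin φ + y * Real.cos φ) (px * Real.cos φ - py * Real.sin φ) pz
      = KHpx y px pz * Real.cos φ - KHpy x py pz * Real.sin φ := by
  unfold KHpx KHpy; ring

lemma KHpy_rot (x y px py pz φ : ℝ) :
    KHpy (x * Real.cos φ - y * Real.sin φ) (px * Real.sin φ + py * Real.cos φ) pz
      = KHpx y px pz * Real.sin φ + KHpy x py pz * Real.cos φ := by
  unfold KHpx KHpy; ring

lemma KHpz_rot (x y px py pz φ : ℝ) :
    KHpz (x * Real.cos φ - y * Real.sin φ) (x * Real.sin φ + y * Real.cos φ)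
      (px * Real.cos φ - py * Real.sin φ) (px * Real.sin φ + py * Real.cos φ) pz
      = KHpz x y px py pz := by
  unfold KHpz
  have hpy := sin_sq_add_cos_sq φ
  linear_combination ((py + (1/2)*x*pz) * x - (px - (1/2)*y*pz) * y) / 2 * hpy

lemma KHx_rot (x y z px py pz φ : ℝ) :
    KHx (x * Real.cos φ - y * Real.sin φ) (x * Real.sin φ + y * Real.cos φ) z
      (px * Real.cos φ - py * Real.sin φ) (px * Real.sin φ + py * Real.cos φ) pz
      = KHx x y z px py pz * Real.cos φ - KHy x y z px py pz * Real.sin φ := by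
  unfold KHx KHy
  rw [Pf_rot, rot_sq]
  ring

lemma KHy_rot (x y z px py pz φ : ℝ) :
    KHy (x * Real.cos φ - y * Real.sin φ) (x * Real.sin φ + y * Real.cos φ) z
      (px * Real.cos φ - py * Real.sin φ) (px * Real.sin φ + py * Real.cos φ) pz
      = KHx x y z px py pz * Real.sin φ + KHy x y z px py pz * Real.cos φ := by
  unfold KHx KHy
  rw [Pf_rot, rot_sq]
  ring

lemma KHz_rot (x y z φ : ℝ) :
    KHz (x * Real.cos φ - y * Real.sin φ) (x * Real.sin φ + y * Real.cos φ) z = KHz x y z := by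
  unfold KHz
  rw [Pf_rot]

-- dilation lemmas
lemma Pf_dil {l : ℝ} (hl : 0 < l) (x y z : ℝ) :
    Pf (l * x) (l * y) (l^2 * z) = l^6 * Pf x y z := by
  unfold Pf Qf
  have hQ : ((l*x)^2 + (l*y)^2)^2 + 16*(l^2*z)^2 = l^4 * ((x^2+y^2)^2 + 16*z^2) := by ring
  rw [hQ, Real.sqrt_mul (by positivity), show l^4 = (l^2)^2 by ring,
    Real.sqrt_sq (by positivity)]
  ring

lemma dil_ne {x y z : ℝ} {l : ℝ} (hl : 0 < l) (h : (x, y, z) ≠ (0, 0, 0)) :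
    (l * x, l * y, l^2 * z) ≠ (0, 0, 0) := by
  intro hc
  simp only [Prod.mk.injEq] at hc
  obtain ⟨h1, h2, h3⟩ := hc
  have hl' : l ≠ 0 := ne_of_gt hl
  have hx : x = 0 := (mul_eq_zero.mp h1).resolve_left hl'
  have hy : y = 0 := (mul_eq_zero.mp h2).resolve_left hl'
  have hz : z = 0 := (mul_eq_zero.mp h3).resolve_left (by positivity)
  exact h (by simp [hx, hy, hz])

lemma KHpx_dil {l : ℝ} (hl : 0 < l) (y px pz : ℝ) :
    KHpx (l * y) (l⁻¹ * px) ((l^2)⁻¹ * pz) = l⁻¹ * KHpx y px pz := by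
  have hl' : l ≠ 0 := ne_of_gt hl
  unfold KHpx; field_simp

lemma KHpy_dil {l : ℝ} (hl : 0 < l) (x py pz : ℝ) :
    KHpy (l * x) (l⁻¹ * py) ((l^2)⁻¹ * pz) = l⁻¹ * KHpy x py pz := by
  have hl' : l ≠ 0 := ne_of_gt hl
  unfold KHpy; field_simp

lemma KHpz_dil {l : ℝ} (hl : 0 < l) (x y px py pz : ℝ) :
    KHpz (l * x) (l * y) (l⁻¹ * px) (l⁻¹ * py) ((l^2)⁻¹ * pz) = KHpz x y px py pz := by
  have hl' : l ≠ 0 := ne_of_gt hl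
  unfold KHpz; field_simp

lemma KHx_dil {l : ℝ} (hl : 0 < l) {x y z : ℝ} (h : (x, y, z) ≠ (0, 0, 0)) (px py pz : ℝ) :
    KHx (l * x) (l * y) (l^2 * z) (l⁻¹ * px) (l⁻¹ * py) ((l^2)⁻¹ * pz)
      = (l^3)⁻¹ * KHx x y z px py pz := by
  have hl' : l ≠ 0 := ne_of_gt hl
  have hP : Pf x y z ≠ 0 := ne_of_gt (Pf_pos h)
  unfold KHx
  rw [Pf_dil hl]
  field_simp

lemma KHy_dil {l : ℝ} (hl : 0 < l) {x y z : ℝ} (h : (x, y, z) ≠ (0, 0, 0)) (px py pz : ℝ) :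
    KHy (l * x) (l * y) (l^2 * z) (l⁻¹ * px) (l⁻¹ * py) ((l^2)⁻¹ * pz)
      = (l^3)⁻¹ * KHy x y z px py pz := by
  have hl' : l ≠ 0 := ne_of_gt hl
  have hP : Pf x y z ≠ 0 := ne_of_gt (Pf_pos h)
  unfold KHy
  rw [Pf_dil hl]
  field_simp

lemma KHz_dil {l : ℝ} (hl : 0 < l) {x y z : ℝ} (h : (x, y, z) ≠ (0, 0, 0)) :
    KHz (l * x) (l * y) (l^2 * z) = (l^4)⁻¹ * KHz x y z := by
  have hl' : l ≠ 0 := ne_of_gt hl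
  have hP : Pf x y z ≠ 0 := ne_of_gt (Pf_pos h)
  unfold KHz
  rw [Pf_dil hl]
  field_simp

/-- Rotations and (time-rescaled) dilations map solutions to solutions:
(a) `t ↦ ρ_φ(c(t))` is a solution on `I`;
(b) `t ↦ δ_λ(c(λ⁻²·t))` is a solution on `{t : λ⁻²·t ∈ I}`. -/
theorem kepler_heisenberg_symmetries_preserve_solutions
    (I : Set ℝ) (x y z px py pz : ℝ → ℝ)
    (hsol : IsSolutionOn I x y z px py pz) :
    (∀ φ : ℝ, IsSolutionOn I
      (fun t => x t * Real.cos φ - y t * Real.sin φ)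
      (fun t => x t * Real.sin φ + y t * Real.cos φ)
      z
      (fun t => px t * Real.cos φ - py t * Real.sin φ)
      (fun t => px t * Real.sin φ + py t * Real.cos φ)
      pz) ∧
    (∀ lam : ℝ, 0 < lam → IsSolutionOn {t : ℝ | lam ^ (-2 : ℤ) * t ∈ I}
      (fun t => lam * x (lam ^ (-2 : ℤ) * t))
      (fun t => lam * y (lam ^ (-2 : ℤ) * t))
      (fun t => lam ^ 2 * z (lam ^ (-2 : ℤ) * t))
      (fun t => lam⁻¹ * px (lam ^ (-2 : ℤ) * t))
      (fun t => lam⁻¹ * py (lam ^ (-2 : ℤ) * t))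
      (fun t => (lam ^ 2)⁻¹ * pz (lam ^ (-2 : ℤ) * t))) := by
  
  obtain ⟨hopen, hconn, hnonempty, hne0, heq⟩ := hsol
  constructor
  · -- rotations
    intro φ
    refine ⟨hopen, hconn, hnonempty, fun t ht => rot_ne φ (hne0 t ht), fun t ht => ?_⟩
    obtain ⟨hx, hy, hz, hpx, hpy, hpz⟩ := heq t ht
    have hne := hne0 t ht
    rw [(hasDerivAt_KH_px _ _ _ _ _ _).deriv] at hx
    rw [(hasDerivAt_KH_py _ _ _ _ _ _).deriv] at hy
    rw [(hasDerivAt_KH_pz _ _ _ _ _ _).deriv] at hz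
    rw [(hasDerivAt_KH_x _ _ _ _ _ _ hne).deriv] at hpx
    rw [(hasDerivAt_KH_y _ _ _ _ _ _ hne).deriv] at hpy
    rw [(hasDerivAt_KH_z _ _ _ _ _ _ hne).deriv] at hpz
    have hne' := rot_ne φ hne
    refine ⟨?_, ?_, ?_, ?_, ?_, ?_⟩
    · rw [(hasDerivAt_KH_px _ _ _ _ _ _).deriv, KHpx_rot]
      exact (hx.mul_const _).sub (hy.mul_const _)
    · rw [(hasDerivAt_KH_py _ _ _ _ _ _).deriv, KHpy_rot]
      exact (hx.mul_const _).add (hy.mul_const _)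
    · rw [(hasDerivAt_KH_pz _ _ _ _ _ _).deriv, KHpz_rot]
      exact hz
    · rw [(hasDerivAt_KH_x _ _ _ _ _ _ hne').deriv, KHx_rot]
      have h := (hpx.mul_const (Real.cos φ)).sub (hpy.mul_const (Real.sin φ))
      exact h.congr_deriv (by ring)
    · rw [(hasDerivAt_KH_y _ _ _ _ _ _ hne').deriv, KHy_rot]
      have h := (hpx.mul_const (Real.sin φ)).add (hpy.mul_const (Real.cos φ))
      exact h.congr_deriv (by ring)
    · rw [(hasDerivAt_KH_z _ _ _ _ _ _ hne').deriv, KHz_rot]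
      exact hpz
  · -- dilations
    intro lam hl
    have hl' : lam ≠ 0 := ne_of_gt hl
    have hμ : (lam : ℝ) ^ (-2 : ℤ) = (lam ^ 2)⁻¹ := by
      rw [zpow_neg, zpow_two, pow_two]
    have hμpos : (0 : ℝ) < lam ^ (-2 : ℤ) := by rw [hμ]; positivity
    refine ⟨?_, ?_, ?_, ?_, ?_⟩
    · exact hopen.preimage (continuous_const.mul continuous_id)
    · constructor
      intro a ha b hb u hu
      refine hconn.out ha hb ⟨?_, ?_⟩
      · exact mul_le_mul_of_nonneg_left hu.1 hμpos.le
      · exact mul_le_mul_of_nonneg_left hu.2 hμpos.le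
    · obtain ⟨s, hs⟩ := hnonempty
      refine ⟨lam ^ 2 * s, ?_⟩
      show lam ^ (-2 : ℤ) * (lam ^ 2 * s) ∈ I
      have hss : lam ^ (-2 : ℤ) * (lam ^ 2 * s) = s := by
        rw [hμ]; field_simp
      rw [hss]; exact hs
    · intro t ht
      exact dil_ne hl (hne0 _ ht)
    · intro t ht
      have ht' : lam ^ (-2 : ℤ) * t ∈ I := ht
      obtain ⟨hx, hy, hz, hpx, hpy, hpz⟩ := heq _ ht'
      have hne := hne0 _ ht'
      rw [(hasDerivAt_KH_px _ _ _ _ _ _).deriv] at hx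
      rw [(hasDerivAt_KH_py _ _ _ _ _ _).deriv] at hy
      rw [(hasDerivAt_KH_pz _ _ _ _ _ _).deriv] at hz
      rw [(hasDerivAt_KH_x _ _ _ _ _ _ hne).deriv] at hpx
      rw [(hasDerivAt_KH_y _ _ _ _ _ _ hne).deriv] at hpy
      rw [(hasDerivAt_KH_z _ _ _ _ _ _ hne).deriv] at hpz
      have hne' := dil_ne hl hne
      have hμt : HasDerivAt (fun u : ℝ => lam ^ (-2 : ℤ) * u) (lam ^ (-2 : ℤ)) t := by
        simpa using (hasDerivAt_id t).const_mul (lam ^ (-2 : ℤ))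
      refine ⟨?_, ?_, ?_, ?_, ?_, ?_⟩
      · rw [(hasDerivAt_KH_px _ _ _ _ _ _).deriv, KHpx_dil hl]
        have h := (hx.comp t hμt).const_mul lam
        have hval : lam * (KHpx (y (lam ^ (-2:ℤ) * t)) (px (lam ^ (-2:ℤ) * t))
            (pz (lam ^ (-2:ℤ) * t)) * lam ^ (-2:ℤ)) = lam⁻¹ * KHpx (y (lam ^ (-2:ℤ) * t))
            (px (lam ^ (-2:ℤ) * t)) (pz (lam ^ (-2:ℤ) * t)) := by
          rw [hμ]; generalize KHpx _ _ _ = D; field_simp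
        rw [← hval]; exact h
      · rw [(hasDerivAt_KH_py _ _ _ _ _ _).deriv, KHpy_dil hl]
        have h := (hy.comp t hμt).const_mul lam
        have hval : lam * (KHpy (x (lam ^ (-2:ℤ) * t)) (py (lam ^ (-2:ℤ) * t))
            (pz (lam ^ (-2:ℤ) * t)) * lam ^ (-2:ℤ)) = lam⁻¹ * KHpy (x (lam ^ (-2:ℤ) * t))
            (py (lam ^ (-2:ℤ) * t)) (pz (lam ^ (-2:ℤ) * t)) := by
          rw [hμ]; generalize KHpy _ _ _ = D; field_simp
        rw [← hval]; exact h
      · rw [(hasDerivAt_KH_pz _ _ _ _ _ _).deriv, KHpz_dil hl]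
        have h := (hz.comp t hμt).const_mul (lam ^ 2)
        have hval : lam ^ 2 * (KHpz (x (lam ^ (-2:ℤ) * t)) (y (lam ^ (-2:ℤ) * t))
            (px (lam ^ (-2:ℤ) * t)) (py (lam ^ (-2:ℤ) * t)) (pz (lam ^ (-2:ℤ) * t))
            * lam ^ (-2:ℤ)) = KHpz (x (lam ^ (-2:ℤ) * t)) (y (lam ^ (-2:ℤ) * t))
            (px (lam ^ (-2:ℤ) * t)) (py (lam ^ (-2:ℤ) * t)) (pz (lam ^ (-2:ℤ) * t)) := by
          rw [hμ]; generalize KHpz _ _ _ _ _ = D; field_simp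
        rw [← hval]; exact h
      · rw [(hasDerivAt_KH_x _ _ _ _ _ _ hne').deriv, KHx_dil hl hne]
        have h := (hpx.comp t hμt).const_mul lam⁻¹
        have hval : lam⁻¹ * (-KHx (x (lam ^ (-2:ℤ) * t)) (y (lam ^ (-2:ℤ) * t))
            (z (lam ^ (-2:ℤ) * t)) (px (lam ^ (-2:ℤ) * t)) (py (lam ^ (-2:ℤ) * t))
            (pz (lam ^ (-2:ℤ) * t)) * lam ^ (-2:ℤ))
            = -((lam ^ 3)⁻¹ * KHx (x (lam ^ (-2:ℤ) * t)) (y (lam ^ (-2:ℤ) * t))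
            (z (lam ^ (-2:ℤ) * t)) (px (lam ^ (-2:ℤ) * t)) (py (lam ^ (-2:ℤ) * t))
            (pz (lam ^ (-2:ℤ) * t))) := by
          rw [hμ]; generalize KHx _ _ _ _ _ _ = D; field_simp
        rw [← hval]; exact h
      · rw [(hasDerivAt_KH_y _ _ _ _ _ _ hne').deriv, KHy_dil hl hne]
        have h := (hpy.comp t hμt).const_mul lam⁻¹
        have hval : lam⁻¹ * (-KHy (x (lam ^ (-2:ℤ) * t)) (y (lam ^ (-2:ℤ) * t))
            (z (lam ^ (-2:ℤ) * t)) (px (lam ^ (-2:ℤ) * t)) (py (lam ^ (-2:ℤ) * t))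
            (pz (lam ^ (-2:ℤ) * t)) * lam ^ (-2:ℤ))
            = -((lam ^ 3)⁻¹ * KHy (x (lam ^ (-2:ℤ) * t)) (y (lam ^ (-2:ℤ) * t))
            (z (lam ^ (-2:ℤ) * t)) (px (lam ^ (-2:ℤ) * t)) (py (lam ^ (-2:ℤ) * t))
            (pz (lam ^ (-2:ℤ) * t))) := by
          rw [hμ]; generalize KHy _ _ _ _ _ _ = D; field_simp
        rw [← hval]; exact h
      · rw [(hasDerivAt_KH_z _ _ _ _ _ _ hne').deriv, KHz_dil hl hne]
        have h := (hpz.comp t hμt).const_mul (lam ^ 2)⁻¹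
        have hval : (lam ^ 2)⁻¹ * (-KHz (x (lam ^ (-2:ℤ) * t)) (y (lam ^ (-2:ℤ) * t))
            (z (lam ^ (-2:ℤ) * t)) * lam ^ (-2:ℤ))
            = -((lam ^ 4)⁻¹ * KHz (x (lam ^ (-2:ℤ) * t)) (y (lam ^ (-2:ℤ) * t))
            (z (lam ^ (-2:ℤ) * t))) := by
          rw [hμ]; generalize KHz _ _ _ = D; field_simp
        rw [← hval]; exact h
end

section
/- At every point q = (x, y, z, p_x, p_y, p_z) ∈ ℝ^6 with x² + y² > 0, the Kepler–Heisenberg Hamiltonian satisfies the identity H(q) = (1/2)·exp(−2s)·( cos(u)·p_s² + 2·sin(u)·p_s·p_θ + sec(u)·p_θ² + 4·cos(u)·p_θ·p_u + 4·cos(u)·p_u² − 1/(4π) ), where s, u, p_s, p_θ, p_u are the adapted coordinate functions of q; equivalently, H = (1/2)·exp(−2s)·( [p_s, p_θ, p_u]·M·[p_s, p_θ, p_u]ᵀ − 1/(4π) ) with M the symmetric matrix with rows (cos u, sin u, 0), (sin u, sec u, 2 cos u), (0, 2 cos u, 4 cos u). -/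
open Real Set

set_option maxHeartbeats 4000000 in
/-- The Hamiltonian in the adapted coordinates: wherever `x² + y² > 0`,
`H = (1/2)·e^{−2s}·(cos u·p_s² + 2 sin u·p_s·p_θ + sec u·p_θ² + 4 cos u·p_θ·p_u
+ 4 cos u·p_u² − 1/(4π))`. -/
theorem kepler_heisenberg_H_adapted_coords
    (x y z px py pz : ℝ) (h : x^2 + y^2 > 0) :
    KH x y z px py pz =
      (1/2) * Real.exp (-2 * sCoord x y z) *
        (Real.cos (uCoord x y z) * (Jmom x y z px py pz)^2
          + 2 * Real.sin (uCoord x y z) * Jmom x y z px py pz * pTheta x y px py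
          + (Real.cos (uCoord x y z))⁻¹ * (pTheta x y px py)^2
          + 4 * Real.cos (uCoord x y z) * pTheta x y px py * pU x y z px py pz
          + 4 * Real.cos (uCoord x y z) * (pU x y z px py pz)^2
          - 1 / (4 * π)) := by
  have hr2 : x^2 + y^2 ≠ 0 := ne_of_gt h
  have hDpos : (0:ℝ) < (x^2+y^2)^2 + 16*z^2 := by
    have h2 := pow_pos h 2
    nlinarith [sq_nonneg z]
  set D := (x^2+y^2)^2 + 16*z^2 with hDdef
  set w := Real.sqrt D with hwdef
  have hwpos : 0 < w := Real.sqrt_pos.mpr hDpos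
  have hw2 : w^2 = D := Real.sq_sqrt hDpos.le
  have hexp : Real.exp (-2 * sCoord x y z) = w⁻¹ := by
    have he2 : Real.exp (Real.log D / 2) ^ 2 = D := by
      rw [sq, ← Real.exp_add, add_halves, Real.exp_log hDpos]
    have hwe : w = Real.exp (Real.log D / 2) := by
      rw [hwdef]
      nth_rewrite 1 [← he2]
      exact Real.sqrt_sq (Real.exp_pos _).le
    rw [sCoord, ← hDdef, hwe, ← Real.exp_neg]
    ring_nf
  have hsq : Real.sqrt (1 + (4 * z / (x^2+y^2))^2) = w / (x^2+y^2) := by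
    have h1 : 1 + (4 * z / (x^2+y^2))^2 = D / (x^2+y^2)^2 := by
      rw [hDdef]; field_simp; ring
    rw [h1, Real.sqrt_div hDpos.le, Real.sqrt_sq h.le, hwdef]
  have hcos : Real.cos (uCoord x y z) = (x^2+y^2) / w := by
    rw [uCoord, Real.cos_arctan, hsq]
    rw [one_div, inv_div]
  have hsin : Real.sin (uCoord x y z) = 4 * z / w := by
    rw [uCoord, Real.sin_arctan, hsq]
    field_simp
  rw [KH, Jmom, pTheta, pU, hexp, hcos, hsin, ← hDdef, ← hwdef]
  have hw4 : w^4 = D^2 := by rw [← hw2]; ring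
  have hw3 : w^3 = D * w := by rw [← hw2]; ring
  have hw5 : w^5 = D^2 * w := by rw [← hw2]; ring
  have hw6 : w^6 = D^3 := by rw [← hw2]; ring
  have hw7 : w^7 = D^3 * w := by rw [← hw2]; ring
  have hw8 : w^8 = D^4 := by rw [← hw2]; ring
  field_simp
  ring_nf
  simp only [hw2, hw3, hw4, hw5, hw6, hw7, hw8, hDdef]
  ring
end

section
/- The dilations and rotations act as translations in the adapted coordinates: for every point q ∈ ℝ^6 with x² + y² > 0, (a) for every λ > 0, s(δ_λ(q)) = s(q) + log λ, while u, p_s, p_θ, p_u take the same values at δ_λ(q) as at q; and (b) for every φ ∈ ℝ, the functions s, u, p_s, p_θ, p_u take the same values at ρ_φ(q) as at q, while the planar position of ρ_φ(q), viewed as the complex number x + iy, is multiplied by e^{iφ} (so the argument of (x, y) shifts by φ modulo 2π). -/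
open Real Set

/-- Dilations and rotations act as translations in the adapted coordinates:
(a) dilation by `λ > 0` shifts `s` by `log λ` and fixes `u, p_s, p_θ, p_u`;
(b) rotation by `φ` fixes `s, u, p_s, p_θ, p_u` and multiplies the planar position,
viewed as the complex number `x + iy`, by `e^{iφ}`. -/
theorem kepler_heisenberg_coord_actions
    (x y z px py pz : ℝ) (h : x^2 + y^2 > 0) :
    (∀ lam : ℝ, 0 < lam →
      sCoord (lam * x) (lam * y) (lam^2 * z) = sCoord x y z + Real.log lam ∧
      uCoord (lam * x) (lam * y) (lam^2 * z) = uCoord x y z ∧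
      Jmom (lam * x) (lam * y) (lam^2 * z) (lam⁻¹ * px) (lam⁻¹ * py) ((lam^2)⁻¹ * pz) =
        Jmom x y z px py pz ∧
      pTheta (lam * x) (lam * y) (lam⁻¹ * px) (lam⁻¹ * py) = pTheta x y px py ∧
      pU (lam * x) (lam * y) (lam^2 * z) (lam⁻¹ * px) (lam⁻¹ * py) ((lam^2)⁻¹ * pz) =
        pU x y z px py pz) ∧
    (∀ φ : ℝ,
      sCoord (x * Real.cos φ - y * Real.sin φ) (x * Real.sin φ + y * Real.cos φ) z =
        sCoord x y z ∧
      uCoord (x * Real.cos φ - y * Real.sin φ) (x * Real.sin φ + y * Real.cos φ) z =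
        uCoord x y z ∧
      Jmom (x * Real.cos φ - y * Real.sin φ) (x * Real.sin φ + y * Real.cos φ) z
          (px * Real.cos φ - py * Real.sin φ) (px * Real.sin φ + py * Real.cos φ) pz =
        Jmom x y z px py pz ∧
      pTheta (x * Real.cos φ - y * Real.sin φ) (x * Real.sin φ + y * Real.cos φ)
          (px * Real.cos φ - py * Real.sin φ) (px * Real.sin φ + py * Real.cos φ) =
        pTheta x y px py ∧
      pU (x * Real.cos φ - y * Real.sin φ) (x * Real.sin φ + y * Real.cos φ) z
          (px * Real.cos φ - py * Real.sin φ) (px * Real.sin φ + py * Real.cos φ) pz =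
        pU x y z px py pz ∧
      ((x * Real.cos φ - y * Real.sin φ : ℝ) : ℂ) +
          ((x * Real.sin φ + y * Real.cos φ : ℝ) : ℂ) * Complex.I =
        Complex.exp (φ * Complex.I) * ((x : ℂ) + (y : ℂ) * Complex.I)) := by
  have h4 : (x^2 + y^2)^2 + 16 * z^2 > 0 := by positivity
  constructor
  · intro lam hl
    have hl2 : lam^2 > 0 := by positivity
    have hl0 : lam ≠ 0 := ne_of_gt hl
    have hkey : ((lam*x)^2 + (lam*y)^2)^2 + 16 * (lam^2*z)^2
        = lam^4 * ((x^2 + y^2)^2 + 16 * z^2) := by ring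
    refine ⟨?_, ?_, ?_, ?_, ?_⟩
    · unfold sCoord
      rw [hkey, Real.log_mul (by positivity) (ne_of_gt h4),
        show lam^4 = lam^(4:ℕ) by norm_num, Real.log_pow]
      push_cast; ring
    · unfold uCoord
      congr 1
      have : (lam*x)^2 + (lam*y)^2 = lam^2 * (x^2 + y^2) := by ring
      rw [this]
      rw [show 4 * (lam^2*z) = lam^2 * (4*z) by ring,
        mul_div_mul_left _ _ (ne_of_gt hl2)]
    · unfold Jmom; field_simp
    · unfold pTheta; field_simp
    · unfold pU
      have : (lam*x)^2 + (lam*y)^2 = lam^2 * (x^2 + y^2) := by ring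
      rw [this]
      field_simp
  · intro φ
    have hrot : (x * Real.cos φ - y * Real.sin φ)^2 + (x * Real.sin φ + y * Real.cos φ)^2
        = x^2 + y^2 := by
      have := Real.sin_sq_add_cos_sq φ
      nlinarith [this]
    refine ⟨?_, ?_, ?_, ?_, ?_, ?_⟩
    · unfold sCoord; rw [hrot]
    · unfold uCoord; rw [hrot]
    · unfold Jmom
      have hs := Real.sin_sq_add_cos_sq φ
      linear_combination (x*px + y*py) * hs
    · unfold pTheta
      have hs := Real.sin_sq_add_cos_sq φ
      linear_combination (x*py - y*px) * hs
    · unfold pU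
      rw [hrot]
      have hs := Real.sin_sq_add_cos_sq φ
      have : (x * Real.cos φ - y * Real.sin φ) * (px * Real.cos φ - py * Real.sin φ)
          + (x * Real.sin φ + y * Real.cos φ) * (px * Real.sin φ + py * Real.cos φ)
          = x * px + y * py := by linear_combination (x*px + y*py) * hs
      rw [this]
    · rw [Complex.exp_mul_I]
      push_cast
      ring_nf
      rw [Complex.I_sq]
      ring
end

section
/- Let q = (x, y, z, p_x, p_y, p_z) ∈ ℝ^6 with x² + y² > 0 and H(q) = 0. Then the dilational momentum p_s = J satisfies −tan(u)·p_θ − √(2·tan²(u)·p_θ² + 1/(4π·cos(u))) ≤ p_s ≤ −tan(u)·p_θ + √(2·tan²(u)·p_θ² + 1/(4π·cos(u))), where u and p_θ are the adapted coordinate functions of q (the quantity under the square root is positive since cos(u) > 0). -/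
open Real Set

lemma cs_aux (A B c d : ℝ) : (A*c + B*d)^2 ≤ (A^2+B^2) * (c^2+d^2) := by
  nlinarith [sq_nonneg (A*d - B*c)]

/-- **Lemma (bounds on the dilational momentum).** At any zero-energy phase point off the
`z`-axis, `−tan(u)·p_θ − √(2 tan²(u)·p_θ² + 1/(4π cos u)) ≤ p_s ≤
−tan(u)·p_θ + √(2 tan²(u)·p_θ² + 1/(4π cos u))`. -/
theorem kepler_heisenberg_ps_bounds
    (x y z px py pz : ℝ) (h : x^2 + y^2 > 0)
    (hH : KH x y z px py pz = 0) :
    -Real.tan (uCoord x y z) * pTheta x y px py -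
        Real.sqrt (2 * (Real.tan (uCoord x y z))^2 * (pTheta x y px py)^2 +
          1 / (4 * π * Real.cos (uCoord x y z))) ≤
      Jmom x y z px py pz ∧
    Jmom x y z px py pz ≤
      -Real.tan (uCoord x y z) * pTheta x y px py +
        Real.sqrt (2 * (Real.tan (uCoord x y z))^2 * (pTheta x y px py)^2 +
          1 / (4 * π * Real.cos (uCoord x y z))) := by
  have hπ : (0:ℝ) < π := Real.pi_pos
  have hr2 : (0:ℝ) < x^2 + y^2 := h
  set r2 := x^2 + y^2 with hr2def
  have hpos : (0:ℝ) < r2^2 + 16*z^2 := by positivity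
  set R := Real.sqrt (r2^2 + 16*z^2) with hRdef
  have hR : 0 < R := Real.sqrt_pos.mpr hpos
  have hR2 : R^2 = r2^2 + 16*z^2 := Real.sq_sqrt hpos.le
  have htan : Real.tan (uCoord x y z) = 4*z/r2 := Real.tan_arctan _
  have hcos : Real.cos (uCoord x y z) = r2 / R := by
    rw [uCoord, Real.cos_arctan]
    have h1 : 1 + (4*z/(x^2+y^2))^2 = R^2/r2^2 := by
      rw [hR2, ← hr2def, div_pow, eq_div_iff (by positivity), add_mul,
        div_mul_cancel₀ _ (by positivity)]; ring
    rw [h1, Real.sqrt_div' _ (by positivity), Real.sqrt_sq hR.le,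
      Real.sqrt_sq hr2.le, one_div, inv_div]
  have hK : (px - (1/2) * y * pz)^2 + (py + (1/2) * x * pz)^2 = 1/(4*π*R) := by
    have hthis := hH
    rw [KH] at hthis
    have hRR : Real.sqrt ((x^2+y^2)^2 + 16*z^2) = R := rfl
    rw [hRR] at hthis
    have hπ0 : π ≠ 0 := hπ.ne'
    have hR0 : R ≠ 0 := hR.ne'
    field_simp at hthis ⊢
    linear_combination hthis/2
  set A := px - (1/2) * y * pz with hA
  set B := py + (1/2) * x * pz with hB
  set pθ := pTheta x y px py with hpθ
  set J := Jmom x y z px py pz with hJ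
  set T := (4*z/r2) * pθ with hT
  set c := x - 4*z*y/r2 with hc
  set d := y + 4*z*x/r2 with hd
  have hEq : J + T = A*c + B*d := by
    rw [hJ, hT, hpθ, hc, hd, hA, hB, Jmom, pTheta]
    field_simp
    ring
  have hcd : c^2 + d^2 = R^2/r2 := by
    rw [hc, hd, hR2]; field_simp; ring
  have hCS : (A*c + B*d)^2 ≤ (A^2+B^2) * (c^2+d^2) := cs_aux A B c d
  have hprod : (A^2+B^2) * (c^2+d^2) = R/(4*π*r2) := by
    rw [hK, hcd]
    field_simp
  set S := 2 * (4*z/r2)^2 * pθ^2 + R/(4*π*r2) with hS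
  have hsq : (J + T)^2 ≤ S := by
    rw [hEq, hS]
    have h2 : (0:ℝ) ≤ 2 * (4*z/r2)^2 * pθ^2 := by positivity
    linarith [hCS.trans_eq hprod]
  have hS0 : 0 ≤ S := le_trans (sq_nonneg _) hsq
  have habs : |J + T| ≤ Real.sqrt S := by
    rw [← Real.sqrt_sq_eq_abs]
    exact Real.sqrt_le_sqrt hsq
  have hgoal : 1 / (4 * π * Real.cos (uCoord x y z)) = R/(4*π*r2) := by
    rw [hcos]; field_simp
  rw [htan, hgoal]
  have h1 : 2 * (4*z/r2)^2 * pθ^2 + R/(4*π*r2) = S := hS.symm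
  rw [h1]
  have := abs_le.mp habs
  constructor <;> [linarith [this.1]; linarith [this.2]]
end

section
/- Let c : I → ℝ^6 be a solution of the Kepler–Heisenberg Hamilton equations with H(c(t)) = 0 for all t ∈ I, with (x(t), y(t)) ≠ (0, 0) for all t ∈ I, and such that z(t₀) = 0 for some t₀ ∈ I. Then the (constant) dilational momentum J = x·p_x + y·p_y + 2z·p_z satisfies |J| ≤ 1/(2√π). -/
open Real Set

lemma R_pos {a b c : ℝ} (h : (a, b, c) ≠ ((0:ℝ), (0:ℝ), (0:ℝ))) :
    0 < (a^2 + b^2)^2 + 16 * c^2 := by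
  rcases (by positivity : (0:ℝ) ≤ (a^2+b^2)^2 + 16*c^2).lt_or_eq with h1 | h1
  · exact h1
  · exfalso
    have hc2 : c^2 = 0 := by nlinarith [sq_nonneg (a^2+b^2), sq_nonneg c]
    have hab2 : (a^2+b^2)^2 = 0 := by nlinarith [sq_nonneg (a^2+b^2), sq_nonneg c]
    have hab : a^2 + b^2 = 0 := by
      exact pow_eq_zero_iff (two_ne_zero) |>.1 hab2
    have ha : a = 0 := by nlinarith [sq_nonneg a, sq_nonneg b]
    have hb : b = 0 := by nlinarith [sq_nonneg a, sq_nonneg b]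
    have hc : c = 0 := pow_eq_zero_iff (two_ne_zero) |>.1 hc2
    exact h (by simp [ha, hb, hc])

lemma hasDerivAt_pot {f : ℝ → ℝ} {f' a : ℝ} (hf : HasDerivAt f f' a) (h0 : 0 < f a) :
    HasDerivAt (fun t => 1 / (8 * π * Real.sqrt (f t)))
      (-(f' / (16 * π * (f a * Real.sqrt (f a))))) a := by
  have hs0 : 0 < Real.sqrt (f a) := Real.sqrt_pos.2 h0
  have h1 : HasDerivAt (fun t => Real.sqrt (f t)) (1 / (2 * Real.sqrt (f a)) * f') a :=
    (Real.hasDerivAt_sqrt h0.ne').comp a hf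
  have h2 : HasDerivAt (fun t => 8 * π * Real.sqrt (f t))
      (8 * π * (1 / (2 * Real.sqrt (f a)) * f')) a := h1.const_mul _
  have h3 := h2.inv (by positivity)
  simp only [one_div]
  refine h3.congr_deriv ?_
  set s := Real.sqrt (f a) with hs
  have hfa : f a = s ^ 2 := (Real.sq_sqrt h0.le).symm
  rw [hfa]
  field_simp
  ring

lemma KH_deriv_px (a b c p q r : ℝ) :
    HasDerivAt (fun v => KH a b c v q r) (p - (1/2)*b*r) p := by
  unfold KH
  have h1 : HasDerivAt (fun v : ℝ => v - (1/2)*b*r) 1 p := (hasDerivAt_id p).sub_const _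
  have h2 := (((h1.pow 2).add_const ((q + (1/2)*a*r)^2)).const_mul (1/2 : ℝ)).sub_const
      (1 / (8 * π * Real.sqrt ((a^2+b^2)^2 + 16*c^2)))
  refine h2.congr_deriv ?_
  ring

lemma KH_deriv_py (a b c p q r : ℝ) :
    HasDerivAt (fun v => KH a b c p v r) (q + (1/2)*a*r) q := by
  unfold KH
  have h1 : HasDerivAt (fun v : ℝ => v + (1/2)*a*r) 1 q := (hasDerivAt_id q).add_const _
  have h2 := (((h1.pow 2).const_add ((p - (1/2)*b*r)^2)).const_mul (1/2 : ℝ)).sub_const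
      (1 / (8 * π * Real.sqrt ((a^2+b^2)^2 + 16*c^2)))
  refine h2.congr_deriv ?_
  ring

lemma KH_deriv_pz (a b c p q r : ℝ) :
    HasDerivAt (fun v => KH a b c p q v)
      (-((1/2)*b) * (p - (1/2)*b*r) + ((1/2)*a) * (q + (1/2)*a*r)) r := by
  unfold KH
  have h1 : HasDerivAt (fun v : ℝ => p - (1/2)*b*v) (-((1/2)*b*1)) r :=
    ((hasDerivAt_id r).const_mul ((1/2)*b)).const_sub p
  have h2 : HasDerivAt (fun v : ℝ => q + (1/2)*a*v) ((1/2)*a*1) r :=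
    ((hasDerivAt_id r).const_mul ((1/2)*a)).const_add q
  have h3 := (((h1.pow 2).add (h2.pow 2)).const_mul (1/2 : ℝ)).sub_const
      (1 / (8 * π * Real.sqrt ((a^2+b^2)^2 + 16*c^2)))
  refine h3.congr_deriv ?_
  ring

lemma KH_deriv_x (a b c p q r : ℝ) (hR : 0 < (a^2+b^2)^2 + 16*c^2) :
    HasDerivAt (fun v => KH v b c p q r)
      ((q + (1/2)*a*r) * ((1/2)*r)
        + a*(a^2+b^2) / (4*π*((((a^2+b^2)^2+16*c^2)) * Real.sqrt ((a^2+b^2)^2+16*c^2)))) a := by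
  unfold KH
  have h2 : HasDerivAt (fun v : ℝ => q + (1/2)*v*r) ((1/2)*1*r) a :=
    (((hasDerivAt_id a).const_mul (1/2)).mul_const r).const_add q
  have hk := ((h2.pow 2).const_add ((p - (1/2)*b*r)^2)).const_mul (1/2 : ℝ)
  have hf : HasDerivAt (fun v : ℝ => (v^2+b^2)^2 + 16*c^2) (4*a*(a^2+b^2)) a := by
    have := ((((hasDerivAt_id a).pow 2).add_const (b^2)).pow 2).add_const (16*c^2)
    refine this.congr_deriv ?_
    simp only [id_eq, Pi.pow_apply]
    ring
  have hpot := hasDerivAt_pot hf (by exact hR)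
  have h3 := hk.sub hpot
  refine h3.congr_deriv ?_
  have hs : (0:ℝ) < Real.sqrt ((a^2+b^2)^2+16*c^2) := Real.sqrt_pos.2 hR
  field_simp
  ring

lemma KH_deriv_y (a b c p q r : ℝ) (hR : 0 < (a^2+b^2)^2 + 16*c^2) :
    HasDerivAt (fun v => KH a v c p q r)
      ((p - (1/2)*b*r) * (-((1/2)*r))
        + b*(a^2+b^2) / (4*π*((((a^2+b^2)^2+16*c^2)) * Real.sqrt ((a^2+b^2)^2+16*c^2)))) b := by
  unfold KH
  have h1 : HasDerivAt (fun v : ℝ => p - (1/2)*v*r) (-((1/2)*1*r)) b :=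
    (((hasDerivAt_id b).const_mul (1/2)).mul_const r).const_sub p
  have hk := ((h1.pow 2).add_const ((q + (1/2)*a*r)^2)).const_mul (1/2 : ℝ)
  have hf : HasDerivAt (fun v : ℝ => (a^2+v^2)^2 + 16*c^2) (4*b*(a^2+b^2)) b := by
    have := ((((hasDerivAt_id b).pow 2).const_add (a^2)).pow 2).add_const (16*c^2)
    refine this.congr_deriv ?_
    simp only [id_eq, Pi.pow_apply]
    ring
  have hpot := hasDerivAt_pot hf (by exact hR)
  have h3 := hk.sub hpot
  refine h3.congr_deriv ?_
  have hs : (0:ℝ) < Real.sqrt ((a^2+b^2)^2+16*c^2) := Real.sqrt_pos.2 hR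
  field_simp
  ring

lemma KH_deriv_z (a b c p q r : ℝ) (hR : 0 < (a^2+b^2)^2 + 16*c^2) :
    HasDerivAt (fun v => KH a b v p q r)
      (2*c / (π*((((a^2+b^2)^2+16*c^2)) * Real.sqrt ((a^2+b^2)^2+16*c^2)))) c := by
  unfold KH
  have hf : HasDerivAt (fun v : ℝ => (a^2+b^2)^2 + 16*v^2) (32*c) c := by
    have := (((hasDerivAt_id c).pow 2).const_mul (16:ℝ)).const_add ((a^2+b^2)^2)
    refine this.congr_deriv ?_
    simp only [id_eq]
    ring
  have hpot := hasDerivAt_pot hf (by exact hR)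
  have h3 := (hasDerivAt_const c
      ((1/2) * ((p - (1/2)*b*r)^2 + (q + (1/2)*a*r)^2))).sub hpot
  refine h3.congr_deriv ?_
  have hs : (0:ℝ) < Real.sqrt ((a^2+b^2)^2+16*c^2) := Real.sqrt_pos.2 hR
  field_simp
  ring


lemma endpoint_bound (a b p q r : ℝ) (hab : 0 < a^2 + b^2)
    (hH0 : KH a b 0 p q r = 0) :
    |a * p + b * q + 2 * 0 * r| ≤ 1 / (2 * Real.sqrt π) := by
  unfold KH at hH0
  have hπ := Real.pi_pos
  have hsqrt : Real.sqrt ((a^2 + b^2)^2 + 16 * (0:ℝ)^2) = a^2 + b^2 := by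
    rw [show (a^2+b^2)^2 + 16*(0:ℝ)^2 = (a^2+b^2)^2 by ring, Real.sqrt_sq hab.le]
  rw [hsqrt] at hH0
  have hK : (p - (1/2)*b*r)^2 + (q + (1/2)*a*r)^2 = 1 / (4*π*(a^2+b^2)) := by
    field_simp [hab.ne'] at hH0 ⊢
    linarith
  have hCS : (a * p + b * q)^2 ≤ (a^2 + b^2) * ((p - (1/2)*b*r)^2 + (q + (1/2)*a*r)^2) := by
    nlinarith [sq_nonneg (a * (q + (1/2)*a*r) - b * (p - (1/2)*b*r))]
  have hJsq : (a * p + b * q)^2 ≤ 1 / (4*π) := by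
    rw [hK] at hCS
    have heq : (a^2 + b^2) * (1 / (4*π*(a^2+b^2))) = 1 / (4*π) := by
      field_simp
    linarith
  have hbd : (1 / (2 * Real.sqrt π))^2 = 1 / (4*π) := by
    rw [div_pow, mul_pow, Real.sq_sqrt hπ.le]
    norm_num
  have h2 : |a * p + b * q| ≤ 1 / (2 * Real.sqrt π) := by
    have hpos : (0:ℝ) ≤ 1 / (2 * Real.sqrt π) := by positivity
    rw [← Real.sqrt_sq hpos, ← Real.sqrt_sq_eq_abs]
    exact Real.sqrt_le_sqrt (by rw [hbd]; exact hJsq)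
  calc |a * p + b * q + 2 * 0 * r| = |a * p + b * q| := by norm_num
    _ ≤ _ := h2

/-- **Proposition (uniform bound on dilational momentum).** For any zero-energy solution
avoiding the `z`-axis whose `z`-coordinate vanishes at some time, the (constant) dilational
momentum satisfies `|J| ≤ 1/(2√π)`. -/
theorem kepler_heisenberg_J_bound
    (I : Set ℝ) (x y z px py pz : ℝ → ℝ)
    (hsol : IsSolutionOn I x y z px py pz)
    (hH : ∀ t ∈ I, KH (x t) (y t) (z t) (px t) (py t) (pz t) = 0)
    (hxy : ∀ t ∈ I, (x t, y t) ≠ (0, 0))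
    (t₀ : ℝ) (ht₀ : t₀ ∈ I) (hz₀ : z t₀ = 0) :
    ∀ t ∈ I, |Jmom (x t) (y t) (z t) (px t) (py t) (pz t)| ≤ 1 / (2 * Real.sqrt π) := by
  obtain ⟨hIopen, hIconn, -, hne0, hde⟩ := hsol
  -- J has derivative 2·H = 0 everywhere on I
  have key : ∀ t ∈ I, HasDerivAt (fun τ => x τ * px τ + y τ * py τ + 2 * z τ * pz τ)
      (2 * KH (x t) (y t) (z t) (px t) (py t) (pz t)) t := by
    intro t ht
    obtain ⟨hdx, hdy, hdz, hdpx, hdpy, hdpz⟩ := hde t ht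
    have hR := R_pos (hne0 t ht)
    have hs : (0:ℝ) < Real.sqrt (((x t)^2+(y t)^2)^2+16*(z t)^2) := Real.sqrt_pos.2 hR
    rw [(KH_deriv_px (x t) (y t) (z t) (px t) (py t) (pz t)).deriv] at hdx
    rw [(KH_deriv_py (x t) (y t) (z t) (px t) (py t) (pz t)).deriv] at hdy
    rw [(KH_deriv_pz (x t) (y t) (z t) (px t) (py t) (pz t)).deriv] at hdz
    rw [(KH_deriv_x (x t) (y t) (z t) (px t) (py t) (pz t) hR).deriv] at hdpx
    rw [(KH_deriv_y (x t) (y t) (z t) (px t) (py t) (pz t) hR).deriv] at hdpy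
    rw [(KH_deriv_z (x t) (y t) (z t) (px t) (py t) (pz t) hR).deriv] at hdpz
    have hsum := ((hdx.mul hdpx).add (hdy.mul hdpy)).add ((hdz.const_mul (2:ℝ)).mul hdpz)
    refine hsum.congr_deriv ?_
    unfold KH
    field_simp
    ring
  -- hence J is constant on I
  have hconv : Convex ℝ I := hIconn.convex
  have hconst : ∀ t ∈ I,
      x t * px t + y t * py t + 2 * z t * pz t
        = x t₀ * px t₀ + y t₀ * py t₀ + 2 * z t₀ * pz t₀ := by
    intro t ht
    have hder : ∀ τ ∈ I, HasDerivWithinAt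
        (fun τ => x τ * px τ + y τ * py τ + 2 * z τ * pz τ) ((fun _ => (0:ℝ)) τ) I τ := by
      intro τ hτ
      have h := key τ hτ
      rw [hH τ hτ, mul_zero] at h
      exact h.hasDerivWithinAt
    have hb := Convex.norm_image_sub_le_of_norm_hasDerivWithin_le (C := 0) hder
        (fun τ _ => by simp) hconv ht₀ ht
    simp only [zero_mul, Real.norm_eq_abs] at hb
    have h0 : x t * px t + y t * py t + 2 * z t * pz t
        - (x t₀ * px t₀ + y t₀ * py t₀ + 2 * z t₀ * pz t₀) = 0 :=
      abs_eq_zero.1 (le_antisymm hb (abs_nonneg _))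
    linarith
  -- endpoint bound
  have hab : 0 < (x t₀)^2 + (y t₀)^2 := by
    rcases (by positivity : (0:ℝ) ≤ (x t₀)^2 + (y t₀)^2).lt_or_eq with h | h
    · exact h
    · exfalso
      apply hxy t₀ ht₀
      have hx2 : (x t₀)^2 = 0 := by nlinarith [sq_nonneg (x t₀), sq_nonneg (y t₀)]
      have hy2 : (y t₀)^2 = 0 := by nlinarith [sq_nonneg (x t₀), sq_nonneg (y t₀)]
      have hx0 : x t₀ = 0 := pow_eq_zero_iff two_ne_zero |>.1 hx2
      have hy0 : y t₀ = 0 := pow_eq_zero_iff two_ne_zero |>.1 hy2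
      simp [hx0, hy0]
  have hH0 : KH (x t₀) (y t₀) 0 (px t₀) (py t₀) (pz t₀) = 0 := by
    have h := hH t₀ ht₀
    rw [hz₀] at h
    exact h
  have hend := endpoint_bound (x t₀) (y t₀) (px t₀) (py t₀) (pz t₀) hab hH0
  intro t ht
  have hc := hconst t ht
  show |x t * px t + y t * py t + 2 * z t * pz t| ≤ _
  rw [hc, hz₀]
  simpa using hend
end

section
/- Let q = (x, y, z, p_x, p_y, p_z) ∈ ℝ^6 with x² + y² > 0, z = 0, and H(q) = 0. Then, with p_u = (1/4)·p_z·(x² + y²) (its value when z = 0), p_θ = x·p_y − y·p_x, and J = x·p_x + y·p_y, one has 4·p_u² + 4·p_θ·p_u + J² + p_θ² − 1/(4π) = 0; equivalently (2·p_u + p_θ)² = 1/(4π) − J². In particular p_u = −(1/2)·p_θ ± (1/2)·√(1/(4π) − J²), and 1/(4π) − J² ≥ 0. -/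
open Real Set

/-- At a zero-energy phase point in the plane `z = 0` (off the `z`-axis), with
`p_u = (1/4)·p_z·(x² + y²)`, `p_θ = x·p_y − y·pₓ` and `J = x·pₓ + y·p_y`:
`4p_u² + 4p_θ·p_u + J² + p_θ² − 1/(4π) = 0`, equivalently `(2p_u + p_θ)² = 1/(4π) − J²`;
in particular `p_u = −p_θ/2 ± (1/2)√(1/(4π) − J²)` and `1/(4π) − J² ≥ 0`. -/
theorem kepler_heisenberg_pu_on_zero_plane
    (x y z px py pz : ℝ) (h : x^2 + y^2 > 0) (hz : z = 0)
    (hH : KH x y z px py pz = 0)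
    (pu pθ J : ℝ)
    (hpu : pu = (1/4) * pz * (x^2 + y^2))
    (hpθ : pθ = x * py - y * px)
    (hJ : J = x * px + y * py) :
    4 * pu^2 + 4 * pθ * pu + J^2 + pθ^2 - 1 / (4 * π) = 0 ∧
    (2 * pu + pθ)^2 = 1 / (4 * π) - J^2 ∧
    (pu = -(1/2) * pθ + (1/2) * Real.sqrt (1 / (4 * π) - J^2) ∨
     pu = -(1/2) * pθ - (1/2) * Real.sqrt (1 / (4 * π) - J^2)) ∧
    1 / (4 * π) - J^2 ≥ 0 := by
  have hπ := Real.pi_pos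
  have hsq : Real.sqrt ((x^2 + y^2)^2 + 16 * z^2) = x^2 + y^2 := by
    rw [hz]
    norm_num
    exact Real.sqrt_sq h.le
  rw [KH, hsq] at hH
  have hx : x^2 + y^2 ≠ 0 := ne_of_gt h
  have hπ' : π ≠ 0 := ne_of_gt hπ
  have h1 : 4 * pu^2 + 4 * pθ * pu + J^2 + pθ^2 - 1 / (4 * π) = 0 := by
    subst hpu hpθ hJ
    field_simp at hH ⊢
    nlinarith [hH, sq_nonneg (x^2+y^2), Real.pi_pos]
  have h2 : (2 * pu + pθ)^2 = 1 / (4 * π) - J^2 := by nlinarith [h1]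
  have h4 : 1 / (4 * π) - J^2 ≥ 0 := h2 ▸ sq_nonneg _
  refine ⟨h1, h2, ?_, h4⟩
  have hs : Real.sqrt (1 / (4 * π) - J^2) = |2 * pu + pθ| := by
    rw [← h2, Real.sqrt_sq_eq_abs]
  rcases abs_cases (2 * pu + pθ) with ⟨ha, _⟩ | ⟨ha, _⟩
  · left; rw [hs, ha]; ring
  · right; rw [hs, ha]; ring
end

section
/- Let c : I → ℝ^6 be a solution of the Kepler–Heisenberg Hamilton equations with H(c(t)) = 0 for all t ∈ I and (x(t), y(t)) ≠ (0, 0) for all t ∈ I, and let J denote the (constant) dilational momentum. If z(t*) = 0 at some time t* ∈ I, then the derivative of z at t* satisfies z'(t*)² = (1/(4π) − J²)/4. In particular, if J² < 1/(4π), then z'(t*) ≠ 0, i.e., the orbit crosses the plane {z = 0} transversally. -/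
open Real Set

lemma deriv_KH_pz (X Y Z PX PY PZ : ℝ) :
    deriv (fun a => KH X Y Z PX PY a) PZ
      = -(Y/2) * (PX - (1/2)*Y*PZ) + (X/2) * (PY + (1/2)*X*PZ) := by
  have h1 : HasDerivAt (fun a : ℝ => PX - (1/2)*Y*a) (0 - (1/2)*Y*1) PZ :=
    (hasDerivAt_const PZ PX).sub ((hasDerivAt_id PZ).const_mul ((1/2)*Y))
  have h2 : HasDerivAt (fun a : ℝ => PY + (1/2)*X*a) (0 + (1/2)*X*1) PZ :=
    (hasDerivAt_const PZ PY).add ((hasDerivAt_id PZ).const_mul ((1/2)*X))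
  have h := (((h1.pow 2).add (h2.pow 2)).const_mul (1/2)).sub_const
      (1 / (8 * π * Real.sqrt ((X^2 + Y^2)^2 + 16 * Z^2)))
  have h' : HasDerivAt (fun a => KH X Y Z PX PY a)
      (-(Y/2) * (PX - (1/2)*Y*PZ) + (X/2) * (PY + (1/2)*X*PZ)) PZ := by
    refine h.congr_deriv ?_
    push_cast
    ring
  exact h'.deriv

/-- At a time where `z` vanishes along a zero-energy solution avoiding the `z`-axis, the
derivative of `z` satisfies `z'(t*)² = (1/(4π) − J²)/4`, with `J` the (constant) dilational
momentum; in particular if `J² < 1/(4π)` the orbit crosses `{z = 0}` transversally. -/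
theorem kepler_heisenberg_transversal_crossing
    (I : Set ℝ) (x y z px py pz : ℝ → ℝ)
    (hsol : IsSolutionOn I x y z px py pz)
    (hH : ∀ t ∈ I, KH (x t) (y t) (z t) (px t) (py t) (pz t) = 0)
    (hxy : ∀ t ∈ I, (x t, y t) ≠ (0, 0))
    (tstar : ℝ) (htstar : tstar ∈ I) (hz : z tstar = 0)
    (J : ℝ)
    (hJ : J = Jmom (x tstar) (y tstar) (z tstar) (px tstar) (py tstar) (pz tstar)) :
    (deriv z tstar)^2 = (1 / (4 * π) - J^2) / 4 ∧
    (J^2 < 1 / (4 * π) → deriv z tstar ≠ 0) := by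
  obtain ⟨hIopen, hIconn, hInon, havoid, hham⟩ := hsol
  set X := x tstar; set Y := y tstar; set PX := px tstar
  set PY := py tstar; set PZ := pz tstar
  have hr2 : X^2 + Y^2 > 0 := by
    have h := hxy tstar htstar
    have : X ≠ 0 ∨ Y ≠ 0 := by
      by_contra hc
      push_neg at hc
      exact h (by simp only [Prod.mk.injEq]; exact hc)
    rcases this with h' | h' <;> positivity
  have hpi : (0:ℝ) < π := Real.pi_pos
  -- derivative of z at tstar
  have hderiv : deriv z tstar = -(Y/2) * (PX - (1/2)*Y*PZ) + (X/2) * (PY + (1/2)*X*PZ) := by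
    have hz' := (hham tstar htstar).2.2.1
    rw [hz'.deriv, deriv_KH_pz]
  -- energy relation at tstar
  have hE := hH tstar htstar
  rw [KH, hz] at hE
  have hsq : Real.sqrt ((X^2 + Y^2)^2 + 16 * (0:ℝ)^2) = X^2 + Y^2 := by
    rw [show (X^2 + Y^2)^2 + 16 * (0:ℝ)^2 = (X^2+Y^2)^2 by ring]
    exact Real.sqrt_sq hr2.le
  rw [hsq] at hE
  have key : (X^2 + Y^2) * ((PX - (1/2)*Y*PZ)^2 + (PY + (1/2)*X*PZ)^2) = 1/(4*π) := by
    have h8 : (8 * π * (X^2 + Y^2)) ≠ 0 := by positivity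
    field_simp at hE ⊢
    nlinarith [hE, hr2, hpi]
  have hJval : J = X * PX + Y * PY := by
    rw [hJ, Jmom, hz]; ring
  have main : (deriv z tstar)^2 = (1 / (4 * π) - J^2) / 4 := by
    rw [hderiv, hJval]
    have expand : X * PX + Y * PY
        = X * (PX - (1/2)*Y*PZ) + Y * (PY + (1/2)*X*PZ) := by ring
    rw [expand]
    linear_combination (1/4) * key
  refine ⟨main, fun hlt h0 => ?_⟩
  rw [h0] at main
  have h2 : J ^ 2 = 1 / (4 * π) := by nlinarith [main]
  linarith
end
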